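/- Let γ be a translation-invariant Gibbsian specification on Ω = E^ℤ with associated potential φ_γ, let μ ∈ G_S(γ), and let τ be any S-invariant Borel probability measure on Ω. Then the specific relative entropy h(τ|μ) = lim_{n→∞} (1/n) H_n(τ|μ) exists and equals P(φ_γ) − h(τ) − ∫ φ_γ dτ, where h(τ) is the Kolmogorov–Sinai entropy of (τ, S) and P(φ_γ) is the topological pressure of φ_γ. -/

import Mathlib

open Filter Topology MeasureTheory

namespace GP

/-- The configuration space `Ω = E^ℤ`. -/
abbrev Conf (E : Type*) := ℤ → E

variable {E : Type*}

/-- The shift by `i`: `(shiftZ i ω) k = ω (k + i)`.  The left shift `S` is `shiftZ 1`. -/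
def shiftZ (i : ℤ) (ω : Conf E) : Conf E := fun k => ω (k + i)

/-- The cylinder set determined by a word `w ∈ E^n` (placed on coordinates `0,…,n-1`). -/
def cylW {n : ℕ} (w : Fin n → E) : Set (Conf E) := {ω | ∀ j : Fin n, ω ((j : ℕ) : ℤ) = w j}

/-- The cylinder set `[ω_0^{n-1}]`. -/
def cylPt (ω : Conf E) (n : ℕ) : Set (Conf E) :=
  {ω' | ∀ j : ℕ, j < n → ω' (j : ℤ) = ω (j : ℤ)}

/-- Birkhoff sum `S_n φ = ∑_{k=0}^{n-1} φ ∘ S^k`. -/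
def birk (φ : Conf E → ℝ) (n : ℕ) (ω : Conf E) : ℝ :=
  ∑ k ∈ Finset.range n, φ (shiftZ (k : ℤ) ω)

/-- Topological pressure of `φ` on the full shift:
`P(φ) = lim_n (1/n) log ∑_{w ∈ E^n} sup_{ω ∈ [w]} exp (S_n φ (ω))`
(the limit exists; we use `limsup` as the defining expression). -/
noncomputable def press [Fintype E] (φ : Conf E → ℝ) : ℝ :=
  Filter.limsup (fun n : ℕ =>
    Real.log (∑ w : Fin n → E, sSup ((fun ω => Real.exp (birk φ n ω)) '' cylW w)) / n) atTop

/-- Kolmogorov–Sinai entropy of a shift-invariant measure on the full shift,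
computed along the canonical generating partition into cylinders
(the limit exists; we use `limsup` as the defining expression). -/
noncomputable def ent [Fintype E] [MeasurableSpace E] (μ : Measure (Conf E)) : ℝ :=
  Filter.limsup (fun n : ℕ =>
    (- ∑ w : Fin n → E, ((μ (cylW w)).toReal * Real.log (μ (cylW w)).toReal)) / n) atTop

/-- Shift invariance of a measure. -/
def ShiftInv [MeasurableSpace E] (μ : Measure (Conf E)) : Prop :=
  Measure.map (shiftZ 1) μ = μ

/-- `μ` is an equilibrium state for `φ`: `μ` is a shift-invariant Borel probability
measure with `h(μ) + ∫ φ dμ = P(φ)`. -/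
def IsEquilibrium [Fintype E] [MeasurableSpace E] (φ : Conf E → ℝ)
    (μ : Measure (Conf E)) : Prop :=
  IsProbabilityMeasure μ ∧ ShiftInv μ ∧ ent μ + ∫ ω, φ ω ∂μ = press φ

/-- `ω^c`: the configuration equal to `c` at site `0` and to `ω` elsewhere. -/
def upd0 (ω : Conf E) (c : E) : Conf E := Function.update ω 0 c

/-- Partial sums `ρ_n(ξ,η) = ∑_{i=-n}^{n} (φ(S^i ξ) - φ(S^i η))`. -/
noncomputable def rhoN (φ : Conf E → ℝ) (ξ η : Conf E) (n : ℕ) : ℝ :=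
  ∑ i ∈ Finset.Icc (-(n : ℤ)) (n : ℤ), (φ (shiftZ i ξ) - φ (shiftZ i η))

/-- `φ` has the extensibility property: for all `a b ∈ E`, the functions
`ω ↦ ∑_{i=-n}^{n} (φ(S^i(ω^b)) - φ(S^i(ω^a)))` converge uniformly as `n → ∞`. -/
def Extensible (φ : Conf E → ℝ) : Prop :=
  ∀ a b : E, ∃ r : Conf E → ℝ,
    TendstoUniformly (fun n ω => rhoN φ (upd0 ω b) (upd0 ω a) n) r atTop

/-- The cocycle `ρ^φ(ξ,η) = lim_n ∑_{i=-n}^{n} (φ(S^i ξ) - φ(S^i η))`. -/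
noncomputable def rho (φ : Conf E → ℝ) (ξ η : Conf E) : ℝ :=
  limUnder atTop (rhoN φ ξ η)

/-- `ξ` and `η` differ in at most finitely many coordinates. -/
def FinDiff (ξ η : Conf E) : Prop := {k : ℤ | ξ k ≠ η k}.Finite

/-- `ovr Λ ξ ω` is the configuration `ξ_Λ ω_{ℤ∖Λ}`, equal to `ξ` on `Λ` and to `ω` off `Λ`. -/
def ovr (Λ : Finset ℤ) (ξ : {k // k ∈ Λ} → E) (ω : Conf E) : Conf E :=
  fun k => if h : k ∈ Λ then ξ ⟨k, h⟩ else ω k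

/-- `γ` is a specification: each `γ_Λ(·|ω_{Λ^c})` is a probability distribution on `E^Λ`,
and the family is consistent (`γ_Λ = γ_Λ ∘ γ_V` for `V ⊆ Λ`); here `γ Λ ω` denotes
`γ_Λ(ω_Λ | ω_{Λ^c})`. -/
def IsSpecification [Fintype E] (γ : Finset ℤ → Conf E → ℝ) : Prop :=
  (∀ (Λ : Finset ℤ) (ω : Conf E), 0 ≤ γ Λ ω) ∧
  (∀ (Λ : Finset ℤ) (ω : Conf E), ∑ ξ : {k // k ∈ Λ} → E, γ Λ (ovr Λ ξ ω) = 1) ∧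
  (∀ V Λ : Finset ℤ, V ⊆ Λ → ∀ ω : Conf E,
     γ Λ ω = (∑ η : {k // k ∈ V} → E, γ Λ (ovr V η ω)) * γ V ω)

/-- Non-nullness: `inf_ω γ_Λ(ω_Λ|ω_{Λ^c}) > 0` for every finite `Λ`. -/
def NonNull (γ : Finset ℤ → Conf E → ℝ) : Prop :=
  ∀ Λ : Finset ℤ, ∃ c > (0 : ℝ), ∀ ω : Conf E, c ≤ γ Λ ω

/-- Continuity (quasilocality): `ω ↦ γ_Λ(ω_Λ|ω_{Λ^c})` is continuous for every finite `Λ`. -/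
def ContSpec [TopologicalSpace E] (γ : Finset ℤ → Conf E → ℝ) : Prop :=
  ∀ Λ : Finset ℤ, Continuous (γ Λ)

/-- A Gibbsian specification: a non-null continuous specification. -/
def IsGibbsSpec [Fintype E] [TopologicalSpace E] (γ : Finset ℤ → Conf E → ℝ) : Prop :=
  IsSpecification γ ∧ NonNull γ ∧ ContSpec γ

/-- Translation invariance of a specification: `γ_{Λ+1} = γ_Λ ∘ S`. -/
def SpecTI (γ : Finset ℤ → Conf E → ℝ) : Prop :=
  ∀ (Λ : Finset ℤ) (ω : Conf E), γ (Λ.image (· + 1)) ω = γ Λ (shiftZ 1 ω)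

/-- `μ` is a DLR-Gibbs measure for the specification `γ`: `μ` is a Borel probability
measure satisfying the DLR equations `∫ γ_Λ(f|·) dμ = ∫ f dμ` for every finite `Λ`
and every continuous `f` (equivalently, each `γ_Λ` is a version of the conditional
probabilities of `μ`). -/
def IsDLRGibbs [Fintype E] [MeasurableSpace E] [TopologicalSpace E]
    (γ : Finset ℤ → Conf E → ℝ) (μ : Measure (Conf E)) : Prop :=
  IsProbabilityMeasure μ ∧
  ∀ (Λ : Finset ℤ) (f : Conf E → ℝ), Continuous f →
    ∫ ω, (∑ ξ : {k // k ∈ Λ} → E, γ Λ (ovr Λ ξ ω) * f (ovr Λ ξ ω)) ∂μ = ∫ ω, f ω ∂μ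

/-- The specification `γ^φ` associated with an extensible potential `φ`:
`γ^φ_Λ(ω_Λ|ω_{Λ^c}) = (∑_{ξ_Λ ∈ E^Λ} exp ρ^φ(ξ_Λ ω_{ℤ∖Λ}, ω))⁻¹`. -/
noncomputable def specOf [Fintype E] (φ : Conf E → ℝ) : Finset ℤ → Conf E → ℝ :=
  fun Λ ω => (∑ ξ : {k // k ∈ Λ} → E, Real.exp (rho φ (ovr Λ ξ ω) ω))⁻¹

/-- The configuration `𝐚_{-∞}^{-1} b ω_1^{∞}`: equal to `a` at all negative
coordinates, to `b` at coordinate `0`, and to `ω` at positive coordinates. -/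
def bca (a : E) (ω : Conf E) (b : E) : Conf E :=
  fun k => if k < 0 then a else if k = 0 then b else ω k

/-- The potential associated with a specification:
`φ_γ(ω) = log (γ_{{0}}(ω_0 | 𝐚_{-∞}^{-1} ω_1^{∞}) / γ_{{0}}(a | 𝐚_{-∞}^{-1} ω_1^{∞}))`. -/
noncomputable def phiOf (γ : Finset ℤ → Conf E → ℝ) (a : E) (ω : Conf E) : ℝ :=
  Real.log (γ ({0} : Finset ℤ) (bca a ω (ω 0)) / γ ({0} : Finset ℤ) (bca a ω a))

/-- `μ` is weak Bowen-Gibbs for `φ` with constant `P`. -/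
def WeakBowenGibbs [MeasurableSpace E] (μ : Measure (Conf E)) (φ : Conf E → ℝ)
    (P : ℝ) : Prop :=
  ∃ C : ℕ → ℝ, (∀ n, 0 < C n) ∧
    Tendsto (fun n : ℕ => Real.log (C n) / n) atTop (𝓝 0) ∧
    ∀ (n : ℕ) (ω : Conf E),
      (C n)⁻¹ ≤ (μ (cylPt ω n)).toReal / Real.exp (birk φ n ω - n * P) ∧
      (μ (cylPt ω n)).toReal / Real.exp (birk φ n ω - n * P) ≤ C n


/-- Finite-volume relative entropy
`H_n(τ|μ) = ∑_{a_0^n ∈ E^{n+1}} τ([a_0^n]) log (τ([a_0^n]) / μ([a_0^n]))`. -/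
noncomputable def relEntN [Fintype E] [MeasurableSpace E]
    (τ μ : Measure (Conf E)) (n : ℕ) : ℝ :=
  ∑ w : Fin (n + 1) → E,
    (τ (cylW w)).toReal * Real.log ((τ (cylW w)).toReal / (μ (cylW w)).toReal)

set_option linter.unusedSectionVars false

section Basics
variable {E : Type*} [Fintype E] [Nonempty E] [TopologicalSpace E] [DiscreteTopology E]
    [MeasurableSpace E] [MeasurableSingletonClass E]

example : CompactSpace (Conf E) := inferInstance
example : BorelSpace (Conf E) := inferInstance

@[simp] lemma shiftZ_apply (i : ℤ) (ω : Conf E) (k : ℤ) : shiftZ i ω k = ω (k + i) := rfl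

lemma shiftZ_shiftZ (i j : ℤ) (ω : Conf E) : shiftZ i (shiftZ j ω) = shiftZ (i + j) ω := by
  funext k; simp [shiftZ, add_assoc]

lemma continuous_shiftZ (i : ℤ) : Continuous (shiftZ (E := E) i) := by
  apply continuous_pi; intro k; exact continuous_apply (k + i)

lemma measurable_shiftZ (i : ℤ) : Measurable (shiftZ (E := E) i) := by
  apply measurable_pi_lambda; intro k; exact measurable_pi_apply (k + i)

lemma measurableSet_cylW {n : ℕ} (w : Fin n → E) : MeasurableSet (cylW w) := by
  have : cylW w = ⋂ j : Fin n, (fun ω : Conf E => ω ((j : ℕ) : ℤ)) ⁻¹' {w j} := by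
    ext ω; simp [cylW, Set.mem_iInter]
  rw [this]
  exact MeasurableSet.iInter fun j => (measurable_pi_apply _) (measurableSet_singleton _)

lemma isClopen_cylW {n : ℕ} (w : Fin n → E) : IsClopen (cylW w) := by
  have : cylW w = ⋂ j : Fin n, (fun ω : Conf E => ω ((j : ℕ) : ℤ)) ⁻¹' {w j} := by
    ext ω; simp [cylW, Set.mem_iInter]
  rw [this]
  exact isClopen_iInter_of_finite fun j =>
    (isClopen_discrete {w j}).preimage (continuous_apply _)

/-- restriction of a configuration to a word -/
def wordOf (n : ℕ) (ω : Conf E) : Fin n → E := fun j => ω ((j : ℕ) : ℤ)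

lemma mem_cylW_iff {n : ℕ} (w : Fin n → E) (ω : Conf E) : ω ∈ cylW w ↔ wordOf n ω = w := by
  constructor
  · intro h; funext j; exact h j
  · intro h j; rw [← h]; rfl

lemma self_mem_cylW (n : ℕ) (ω : Conf E) : ω ∈ cylW (wordOf n ω) := fun _ => rfl

lemma cylW_pairwise_disjoint (n : ℕ) :
    Pairwise (Function.onFun Disjoint fun w : Fin n → E => cylW w) := by
  intro w w' hne
  rw [Function.onFun, Set.disjoint_left]
  intro ω hw hw'
  exact hne (((mem_cylW_iff w ω).1 hw).symm.trans ((mem_cylW_iff w' ω).1 hw'))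

lemma iUnion_cylW (n : ℕ) : (⋃ w : Fin n → E, cylW w) = Set.univ := by
  ext ω; simp only [Set.mem_iUnion, Set.mem_univ, iff_true]
  exact ⟨wordOf n ω, self_mem_cylW n ω⟩

lemma sum_measure_cylW (ν : Measure (Conf E)) [IsProbabilityMeasure ν] (n : ℕ) :
    ∑ w : Fin n → E, (ν (cylW w)).toReal = 1 := by
  have h1 : ν (⋃ w : Fin n → E, cylW w) = ∑' w : Fin n → E, ν (cylW w) :=
    MeasureTheory.measure_iUnion (cylW_pairwise_disjoint n) (fun w => measurableSet_cylW w)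
  rw [iUnion_cylW, tsum_fintype] at h1
  have h2 : (∑ w : Fin n → E, ν (cylW w)).toReal = 1 := by
    rw [← h1]; simp
  rw [ENNReal.toReal_sum (fun w _ => measure_ne_top ν _)] at h2
  exact h2

lemma integrable_of_continuous {g : Conf E → ℝ} (hg : Continuous g)
    (ν : Measure (Conf E)) [IsProbabilityMeasure ν] : MeasureTheory.Integrable g ν := by
  obtain ⟨x0⟩ := (inferInstance : Nonempty (Conf E))
  obtain ⟨z, -, hz⟩ := isCompact_univ.exists_isMaxOn ⟨x0, trivial⟩ hg.abs.continuousOn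
  exact (MeasureTheory.integrable_const (|g z|)).mono' hg.aestronglyMeasurable
    (Filter.Eventually.of_forall fun x => by simpa using hz trivial)

end Basics
section Modulus
variable {E : Type*} [Fintype E] [Nonempty E] [TopologicalSpace E] [DiscreteTopology E]

/-- pairs of configurations agreeing on `[-m, m]` -/
def agreeSet (E : Type*) (m : ℕ) : Set (Conf E × Conf E) :=
  {p | ∀ k : ℤ, |k| ≤ (m : ℤ) → p.1 k = p.2 k}

lemma agreeSet_nonempty (m : ℕ) : (agreeSet E m).Nonempty := by
  obtain ⟨x0⟩ := (inferInstance : Nonempty (Conf E))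
  exact ⟨(x0, x0), fun k _ => rfl⟩

lemma agreeSet_antitone {m m' : ℕ} (h : m ≤ m') : agreeSet E m' ⊆ agreeSet E m :=
  fun p hp k hk => hp k (hk.trans (by exact_mod_cast h))

lemma isClosed_agreeSet (m : ℕ) : IsClosed (agreeSet E m) := by
  have : agreeSet E m = ⋂ k : {k : ℤ // |k| ≤ (m : ℤ)},
      {p : Conf E × Conf E | p.1 k = p.2 k} := by
    ext p; simp only [agreeSet, Set.mem_iInter, Set.mem_setOf_eq, Subtype.forall]
  rw [this]
  exact isClosed_iInter fun k => isClosed_eq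
    ((continuous_apply (k : ℤ)).comp continuous_fst)
    ((continuous_apply (k : ℤ)).comp continuous_snd)

/-- modulus of (uniform) continuity of `g` along two-sided cylinders -/
noncomputable def mdl (g : Conf E → ℝ) (m : ℕ) : ℝ :=
  sSup ((fun p : Conf E × Conf E => |g p.1 - g p.2|) '' agreeSet E m)

lemma mdl_bddAbove {g : Conf E → ℝ} (hg : Continuous g) (m : ℕ) :
    BddAbove ((fun p : Conf E × Conf E => |g p.1 - g p.2|) '' agreeSet E m) := by
  obtain ⟨x0⟩ := (inferInstance : Nonempty (Conf E))
  obtain ⟨z, -, hz⟩ := isCompact_univ.exists_isMaxOn ⟨x0, trivial⟩ hg.abs.continuousOn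
  refine ⟨2 * |g z|, ?_⟩
  rintro x ⟨p, -, rfl⟩
  calc |g p.1 - g p.2| ≤ |g p.1| + |g p.2| := abs_sub _ _
  _ ≤ |g z| + |g z| := add_le_add (hz trivial) (hz trivial)
  _ = 2 * |g z| := by ring

lemma le_mdl {g : Conf E → ℝ} (hg : Continuous g) {m : ℕ} {ω ω' : Conf E}
    (h : ∀ k : ℤ, |k| ≤ (m : ℤ) → ω k = ω' k) : |g ω - g ω'| ≤ mdl g m :=
  le_csSup (mdl_bddAbove hg m) ⟨(ω, ω'), h, rfl⟩

lemma mdl_nonneg {g : Conf E → ℝ} (hg : Continuous g) (m : ℕ) : 0 ≤ mdl g m := by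
  obtain ⟨x0⟩ := (inferInstance : Nonempty (Conf E))
  have := le_mdl hg (m := m) (ω := x0) (ω' := x0) (fun _ _ => rfl)
  simpa using this

lemma mdl_antitone {g : Conf E → ℝ} (hg : Continuous g) : Antitone (mdl g) := by
  intro m m' h
  apply csSup_le ((agreeSet_nonempty m').image _)
  rintro x ⟨p, hp, rfl⟩
  exact le_csSup (mdl_bddAbove hg m) ⟨p, agreeSet_antitone h hp, rfl⟩

lemma tendsto_mdl {g : Conf E → ℝ} (hg : Continuous g) :
    Filter.Tendsto (mdl g) Filter.atTop (nhds 0) := by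
  rw [Metric.tendsto_atTop]
  intro ε hε
  -- find M such that agreement on [-M,M] forces |Δg| ≤ ε/2
  have key : ∃ M : ℕ, ∀ p ∈ agreeSet E M, |g p.1 - g p.2| ≤ ε / 2 := by
    by_contra hcon
    push_neg at hcon
    set K : ℕ → Set (Conf E × Conf E) :=
      fun M => agreeSet E M ∩ {p | ε / 2 ≤ |g p.1 - g p.2|} with hK
    have hclosed : ∀ M, IsClosed (K M) := fun M =>
      (isClosed_agreeSet M).inter (isClosed_le continuous_const
        (((hg.comp continuous_fst).sub (hg.comp continuous_snd)).abs))
    have hne : ∀ M, (K M).Nonempty := by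
      intro M
      obtain ⟨p, hp1, hp2⟩ := hcon M
      exact ⟨p, hp1, le_of_lt hp2⟩
    have hanti : Antitone K := fun m m' h =>
      Set.inter_subset_inter_left _ (agreeSet_antitone h)
    have hinter : (⋂ M, K M).Nonempty :=
      IsCompact.nonempty_iInter_of_directed_nonempty_isCompact_isClosed K
        hanti.directed_ge hne (fun M => (hclosed M).isCompact) hclosed
    obtain ⟨p, hp⟩ := hinter
    simp only [Set.mem_iInter] at hp
    have heq : p.1 = p.2 := by
      funext k
      exact (hp k.natAbs).1 k (le_of_eq (Int.abs_eq_natAbs k))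
    have h2 := (hp 0).2
    simp only [Set.mem_setOf_eq] at h2
    rw [heq, sub_self, abs_zero] at h2
    linarith
  obtain ⟨M, hM⟩ := key
  refine ⟨M, fun m hm => ?_⟩
  have h1 : mdl g m ≤ mdl g M := mdl_antitone hg hm
  have h2 : mdl g M ≤ ε / 2 := by
    apply csSup_le ((agreeSet_nonempty M).image _)
    rintro x ⟨p, hp, rfl⟩
    exact hM p hp
  rw [Real.dist_eq, sub_zero, abs_of_nonneg (mdl_nonneg hg m)]
  linarith

end Modulus
section Phi
variable {E : Type*} [Fintype E] [Nonempty E] [TopologicalSpace E] [DiscreteTopology E]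
    [MeasurableSpace E] [MeasurableSingletonClass E]
variable {γ : Finset ℤ → Conf E → ℝ}

lemma gamma_pos (hnn : NonNull γ) (Λ : Finset ℤ) (ω : Conf E) : 0 < γ Λ ω := by
  obtain ⟨c, hc, h⟩ := hnn Λ
  exact lt_of_lt_of_le hc (h ω)

lemma ovr_self (Λ : Finset ℤ) (ω : Conf E) :
    ovr Λ (fun k => ω (k : ℤ)) ω = ω := by
  funext k; unfold ovr; split <;> rfl

lemma gamma_le_one (hs : IsSpecification γ) (Λ : Finset ℤ) (ω : Conf E) : γ Λ ω ≤ 1 := by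
  have h2 := hs.2.1 Λ ω
  calc γ Λ ω = γ Λ (ovr Λ (fun k => ω (k : ℤ)) ω) := by rw [ovr_self]
  _ ≤ ∑ ξ : {k // k ∈ Λ} → E, γ Λ (ovr Λ ξ ω) :=
      Finset.single_le_sum (f := fun ξ : {k // k ∈ Λ} → E => γ Λ (ovr Λ ξ ω))
        (fun ξ _ => hs.1 Λ _) (Finset.mem_univ _)
  _ = 1 := h2

/-- `log γ_{{0}}` -/
noncomputable def lg0 (γ : Finset ℤ → Conf E → ℝ) : Conf E → ℝ :=
  fun ω => Real.log (γ ({0} : Finset ℤ) ω)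

lemma continuous_lg0 (hγ : IsGibbsSpec γ) : Continuous (lg0 γ) :=
  (hγ.2.2 ({0} : Finset ℤ)).log fun ω => ne_of_gt (gamma_pos hγ.2.1 _ ω)

lemma lg0_nonpos (hγ : IsGibbsSpec γ) (ω : Conf E) : lg0 γ ω ≤ 0 :=
  Real.log_nonpos (le_of_lt (gamma_pos hγ.2.1 _ ω)) (gamma_le_one hγ.1 _ ω)

lemma phiOf_eq (hγ : IsGibbsSpec γ) (a : E) (ω : Conf E) :
    phiOf γ a ω = lg0 γ (bca a ω (ω 0)) - lg0 γ (bca a ω a) := by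
  unfold phiOf lg0
  exact Real.log_div (ne_of_gt (gamma_pos hγ.2.1 _ _)) (ne_of_gt (gamma_pos hγ.2.1 _ _))

lemma continuous_bca (a : E) (b : Conf E → E) (hb : Continuous b) :
    Continuous (fun ω : Conf E => bca a ω (b ω)) := by
  refine continuous_pi fun k => ?_
  by_cases h1 : k < 0
  · simpa [bca, h1] using continuous_const
  by_cases h2 : k = 0
  · simpa [bca, h1, h2] using hb
  · simpa [bca, h1, h2] using continuous_apply k

lemma continuous_phiOf (hγ : IsGibbsSpec γ) (a : E) : Continuous (phiOf γ a) := by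
  have h : phiOf γ a = fun ω => lg0 γ (bca a ω (ω 0)) - lg0 γ (bca a ω a) := by
    funext ω; exact phiOf_eq hγ a ω
  rw [h]
  exact ((continuous_lg0 hγ).comp (continuous_bca a _ (continuous_apply 0))).sub
    ((continuous_lg0 hγ).comp (continuous_bca a _ continuous_const))

/-- configuration with `a` at all negative coordinates -/
def fillA (a : E) (ω : Conf E) : Conf E := fun k => if k < 0 then a else ω k

lemma bca_fillA (a b : E) (ω : Conf E) : bca a (fillA a ω) b = bca a ω b := by
  funext k
  unfold bca fillA
  by_cases h1 : k < 0 <;> by_cases h2 : k = 0 <;> simp [h1, h2]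

lemma phiOf_fillA (a : E) (ω : Conf E) : phiOf γ a (fillA a ω) = phiOf γ a ω := by
  unfold phiOf
  rw [bca_fillA, bca_fillA]
  have h0 : fillA a ω 0 = ω 0 := by simp [fillA]
  rw [h0]

/-- one-sided agreement bound for `φ` -/
lemma phi_agree (hγ : IsGibbsSpec γ) (a : E) (m : ℕ) (ω ω' : Conf E)
    (h : ∀ k : ℤ, 0 ≤ k → k < (m : ℤ) + 1 → ω k = ω' k) :
    |phiOf γ a ω - phiOf γ a ω'| ≤ mdl (phiOf γ a) m := by
  rw [← phiOf_fillA a ω, ← phiOf_fillA a ω']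
  apply le_mdl (continuous_phiOf hγ a)
  intro k hk
  unfold fillA
  by_cases h1 : k < 0
  · simp [h1]
  · simp only [h1, if_false]
    exact h k (not_lt.1 h1) (by have := (le_abs_self k).trans hk; omega)

lemma birk_agree (hγ : IsGibbsSpec γ) (a : E) (n : ℕ) (x y : Conf E)
    (h : ∀ k : ℤ, 0 ≤ k → k < (n : ℤ) → x k = y k) :
    |birk (phiOf γ a) n x - birk (phiOf γ a) n y| ≤
      ∑ i ∈ Finset.range n, mdl (phiOf γ a) i := by
  unfold birk
  rw [← Finset.sum_sub_distrib]
  calc |∑ j ∈ Finset.range n, (phiOf γ a (shiftZ (j : ℤ) x) - phiOf γ a (shiftZ (j : ℤ) y))|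
      ≤ ∑ j ∈ Finset.range n, |phiOf γ a (shiftZ (j : ℤ) x) - phiOf γ a (shiftZ (j : ℤ) y)| :=
        Finset.abs_sum_le_sum_abs _ _
  _ ≤ ∑ j ∈ Finset.range n, mdl (phiOf γ a) (n - 1 - j) := by
      apply Finset.sum_le_sum
      intro j hj
      rw [Finset.mem_range] at hj
      apply phi_agree hγ a
      intro k hk hk'
      simp only [shiftZ_apply]
      apply h _ (by omega)
      have : ((n - 1 - j : ℕ) : ℤ) = (n : ℤ) - 1 - (j : ℤ) := by omega
      omega
  _ = ∑ i ∈ Finset.range n, mdl (phiOf γ a) i := by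
      rw [← Finset.sum_range_reflect]
      apply Finset.sum_congr rfl
      intro j hj
      rw [Finset.mem_range] at hj
      congr 1
      omega

/-- single-site conditional ratio identity -/
lemma log_ratio_single (hγ : IsGibbsSpec γ) {j : ℤ} {Λ : Finset ℤ} (hj : j ∈ Λ)
    (ω ω' : Conf E) (h : ∀ k : ℤ, k ≠ j → ω k = ω' k) :
    Real.log (γ Λ ω) - Real.log (γ Λ ω') =
      Real.log (γ {j} ω) - Real.log (γ {j} ω') := by
  have hsub : ({j} : Finset ℤ) ⊆ Λ := Finset.singleton_subset_iff.2 hj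
  have h1 := hγ.1.2.2 {j} Λ hsub ω
  have h2 := hγ.1.2.2 {j} Λ hsub ω'
  have hov : ∀ η : {k // k ∈ ({j} : Finset ℤ)} → E, ovr {j} η ω = ovr {j} η ω' := by
    intro η; funext k
    unfold ovr
    split
    · rfl
    · exact h k (by simpa using ‹¬ k ∈ ({j} : Finset ℤ)›)
  have hsum : (∑ η : {k // k ∈ ({j} : Finset ℤ)} → E, γ Λ (ovr {j} η ω)) =
      ∑ η : {k // k ∈ ({j} : Finset ℤ)} → E, γ Λ (ovr {j} η ω') := by
    apply Finset.sum_congr rfl; intro η _; rw [hov η]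
  set T := ∑ η : {k // k ∈ ({j} : Finset ℤ)} → E, γ Λ (ovr {j} η ω) with hT
  rw [← hsum] at h2
  have ha := gamma_pos hγ.2.1 Λ ω
  have hb := gamma_pos hγ.2.1 ({j} : Finset ℤ) ω
  have hb' := gamma_pos hγ.2.1 ({j} : Finset ℤ) ω'
  have hTpos : 0 < T := by
    rcases mul_pos_iff.mp (h1 ▸ ha) with ⟨h', _⟩ | ⟨_, h''⟩
    · exact h'
    · exact absurd hb (not_lt.2 (le_of_lt h''))
  rw [h1, h2, Real.log_mul (ne_of_gt hTpos) (ne_of_gt hb),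
    Real.log_mul (ne_of_gt hTpos) (ne_of_gt hb')]
  ring

/-- translation invariance iterated -/
lemma gamma_singleton_shift (hTI : SpecTI γ) (j : ℕ) (ω : Conf E) :
    γ ({(j : ℤ)} : Finset ℤ) ω = γ ({0} : Finset ℤ) (shiftZ (j : ℤ) ω) := by
  induction j generalizing ω with
  | zero =>
      have : shiftZ (0 : ℤ) ω = ω := by funext k; simp [shiftZ]
      simp [this]
  | succ j ih =>
      have himg : (({(j : ℤ)} : Finset ℤ).image (· + 1)) = {((j : ℕ) + 1 : ℤ)} := by
        simp
      have h1 : γ ({((j : ℕ) + 1 : ℤ)} : Finset ℤ) ω = γ ({(j : ℤ)} : Finset ℤ) (shiftZ 1 ω) := by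
        rw [← himg]; exact hTI _ ω
      have h2 : ((j + 1 : ℕ) : ℤ) = ((j : ℕ) + 1 : ℤ) := by push_cast; ring
      rw [h2, h1, ih (shiftZ 1 ω), shiftZ_shiftZ]

end Phi
section Pat
variable {E : Type*} [Fintype E] [Nonempty E] [TopologicalSpace E] [DiscreteTopology E]
    [MeasurableSpace E] [MeasurableSingletonClass E]

/-- word `w` written on `[0,n)`, `η` elsewhere -/
def pat {n : ℕ} (w : Fin n → E) (η : Conf E) : Conf E :=
  fun k => if h : 0 ≤ k ∧ k < (n : ℤ) then w ⟨k.toNat, by omega⟩ else η k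

lemma pat_apply_in {n : ℕ} (w : Fin n → E) (η : Conf E) {k : ℤ} (h : 0 ≤ k ∧ k < (n : ℤ)) :
    pat w η k = w ⟨k.toNat, by omega⟩ := dif_pos h

lemma pat_apply_out {n : ℕ} (w : Fin n → E) (η : Conf E) {k : ℤ} (h : ¬(0 ≤ k ∧ k < (n : ℤ))) :
    pat w η k = η k := dif_neg h

lemma pat_mem_cylW {n : ℕ} (w : Fin n → E) (η : Conf E) : pat w η ∈ cylW w := by
  intro j
  rw [pat_apply_in w η ⟨Int.natCast_nonneg _, by exact_mod_cast j.2⟩]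
  exact congrArg w (Fin.ext (by simp))

lemma continuous_pat {n : ℕ} (w : Fin n → E) : Continuous (fun η : Conf E => pat w η) := by
  refine continuous_pi fun k => ?_
  by_cases h : 0 ≤ k ∧ k < (n : ℤ)
  · simpa [pat, h] using continuous_const
  · simpa [pat, h] using continuous_apply k

/-- the interval `[0,n)` as a finset -/
noncomputable abbrev Λn (n : ℕ) : Finset ℤ := Finset.Ico (0 : ℤ) (n : ℤ)

/-- the word `w` as a configuration on `Λn n` -/
def ξW {n : ℕ} (w : Fin n → E) : {k // k ∈ Λn n} → E :=
  fun k => w ⟨(k : ℤ).toNat, by have := Finset.mem_Ico.mp k.2; omega⟩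

lemma ovr_eq_pat {n : ℕ} (w : Fin n → E) (η : Conf E) : ovr (Λn n) (ξW w) η = pat w η := by
  funext k
  unfold ovr
  by_cases h : 0 ≤ k ∧ k < (n : ℤ)
  · rw [dif_pos (Finset.mem_Ico.mpr ⟨h.1, h.2⟩), pat_apply_in w η h]
    rfl
  · rw [dif_neg (fun hk => h (by simpa using Finset.mem_Ico.mp hk)), pat_apply_out w η h]

lemma ovr_mem_cylW_iff {n : ℕ} (w : Fin n → E) (η : Conf E) (ξ : {k // k ∈ Λn n} → E) :
    ovr (Λn n) ξ η ∈ cylW w ↔ ξ = ξW w := by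
  constructor
  · intro h
    funext k
    obtain ⟨h0, h1⟩ := Finset.mem_Ico.mp k.2
    have hj : (k : ℤ).toNat < n := by omega
    have hcw := h ⟨(k : ℤ).toNat, hj⟩
    have hcast : (((k : ℤ).toNat : ℕ) : ℤ) = (k : ℤ) := by omega
    unfold ovr at hcw
    rw [dif_pos (by rw [hcast]; exact k.2)] at hcw
    unfold ξW
    convert hcw using 2 <;> simp [hcast]
  · rintro rfl
    rw [ovr_eq_pat]
    exact pat_mem_cylW w η

variable {γ : Finset ℤ → Conf E → ℝ} {μ : Measure (Conf E)}

/-- the DLR equation applied to the indicator of a cylinder -/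
lemma mu_cylW_eq (hμ : IsDLRGibbs γ μ) {n : ℕ} (w : Fin n → E) :
    (μ (cylW w)).toReal = ∫ η, γ (Λn n) (pat w η) ∂μ := by
  classical
  set f : Conf E → ℝ := fun ω => if ω ∈ cylW w then 1 else 0 with hf
  have hfc : Continuous f := by
    apply Continuous.if _ continuous_const continuous_const
    intro x hx
    rw [Set.setOf_mem_eq, (isClopen_cylW w).frontier_eq] at hx
    exact absurd hx (Set.notMem_empty x)
  have hdlr := hμ.2 (Λn n) f hfc
  have hind : ∀ ω, f ω = (cylW w).indicator (fun _ => (1:ℝ)) ω := by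
    intro ω
    by_cases h : ω ∈ cylW w <;> simp [hf, h]
  have hrhs : ∫ ω, f ω ∂μ = (μ (cylW w)).toReal := by
    rw [integral_congr_ae (Filter.Eventually.of_forall hind)]
    exact MeasureTheory.integral_indicator_one (measurableSet_cylW w)
  have hlhs : ∀ ω, (∑ ξ : {k // k ∈ Λn n} → E, γ (Λn n) (ovr (Λn n) ξ ω) * f (ovr (Λn n) ξ ω))
      = γ (Λn n) (pat w ω) := by
    intro ω
    rw [Finset.sum_eq_single (ξW w)]
    · rw [ovr_eq_pat]
      simp [hf, pat_mem_cylW w ω]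
    · intro ξ _ hne
      have : ¬ (ovr (Λn n) ξ ω ∈ cylW w) := fun hmem => hne ((ovr_mem_cylW_iff w ω ξ).mp hmem)
      simp [hf, this]
    · intro h
      exact absurd (Finset.mem_univ _) h
  rw [← hrhs, ← hdlr]
  apply integral_congr_ae
  exact Filter.Eventually.of_forall fun ω => hlhs ω

end Pat
section Telescope
variable {E : Type*} [Fintype E] [Nonempty E] [TopologicalSpace E] [DiscreteTopology E]
    [MeasurableSpace E] [MeasurableSingletonClass E]
variable {γ : Finset ℤ → Conf E → ℝ}

/-- `w` with the first `j` letters replaced by `a` -/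
def mixW (a : E) {n : ℕ} (w : Fin n → E) (j : ℕ) : Fin n → E :=
  fun i => if (i : ℕ) < j then a else w i

lemma mixW_zero (a : E) {n : ℕ} (w : Fin n → E) : mixW a w 0 = w := by
  funext i; exact if_neg (Nat.not_lt_zero _)

lemma mixW_top (a : E) {n : ℕ} (w : Fin n → E) : mixW a w n = fun _ => a := by
  funext i; exact if_pos i.isLt

lemma telescope (hγ : IsGibbsSpec γ) (hTI : SpecTI γ) (a : E) (n : ℕ) (w : Fin n → E)
    (η : Conf E) :
    |Real.log (γ (Λn n) (pat w η)) - Real.log (γ (Λn n) (pat (fun _ : Fin n => a) η))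
      - birk (phiOf γ a) n (pat w η)| ≤ 2 * ∑ j ∈ Finset.range n, mdl (lg0 γ) j := by
  set φ := phiOf γ a with hφ
  set ζ : ℕ → Conf E := fun j => pat (mixW a w j) η with hζ
  have hζ0 : ζ 0 = pat w η := by rw [hζ]; simp only [mixW_zero]
  have hζn : ζ n = pat (fun _ : Fin n => a) η := by rw [hζ]; simp only [mixW_top]
  rw [← hζ0, ← hζn]
  have htel : Real.log (γ (Λn n) (ζ 0)) - Real.log (γ (Λn n) (ζ n)) =
      ∑ j ∈ Finset.range n, (Real.log (γ (Λn n) (ζ j)) - Real.log (γ (Λn n) (ζ (j + 1)))) :=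
    (Finset.sum_range_sub' (fun j => Real.log (γ (Λn n) (ζ j))) n).symm
  have key : ∀ j, j < n →
      |Real.log (γ (Λn n) (ζ j)) - Real.log (γ (Λn n) (ζ (j + 1))) - φ (shiftZ (j : ℤ) (ζ 0))|
        ≤ 2 * mdl (lg0 γ) j := by
    intro j hj
    have hjmem : ((j : ℕ) : ℤ) ∈ Λn n :=
      Finset.mem_Ico.mpr ⟨Int.natCast_nonneg _, by exact_mod_cast hj⟩
    have hagree : ∀ k : ℤ, k ≠ ((j : ℕ) : ℤ) → ζ j k = ζ (j + 1) k := by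
      intro k hk
      simp only [hζ, pat, mixW]
      split_ifs <;> first | rfl | omega
    have hstep := log_ratio_single hγ hjmem (ζ j) (ζ (j + 1)) hagree
    have hsh1 : γ ({((j : ℕ) : ℤ)} : Finset ℤ) (ζ j) = γ ({0} : Finset ℤ) (shiftZ (j : ℤ) (ζ j)) :=
      gamma_singleton_shift hTI j _
    have hsh2 : γ ({((j : ℕ) : ℤ)} : Finset ℤ) (ζ (j + 1))
        = γ ({0} : Finset ℤ) (shiftZ (j : ℤ) (ζ (j + 1))) := gamma_singleton_shift hTI j _
    rw [hstep, hsh1, hsh2]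
    set ψ := shiftZ ((j : ℕ) : ℤ) (ζ 0) with hψ
    have hφeq : φ ψ = lg0 γ (bca a ψ (ψ 0)) - lg0 γ (bca a ψ a) := phiOf_eq hγ a ψ
    have hA1 : |lg0 γ (shiftZ (j : ℤ) (ζ j)) - lg0 γ (bca a ψ (ψ 0))| ≤ mdl (lg0 γ) j := by
      apply le_mdl (continuous_lg0 hγ)
      intro k hk
      have hk' : -(j : ℤ) ≤ k ∧ k ≤ (j : ℤ) := abs_le.mp hk
      simp only [hψ, hζ, shiftZ_apply, bca, pat, mixW]
      split_ifs <;> first | rfl | omega | (exact congrArg w (Fin.ext (by simp only [Fin.val_mk]; omega)))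
    have hA2 : |lg0 γ (shiftZ (j : ℤ) (ζ (j + 1))) - lg0 γ (bca a ψ a)| ≤ mdl (lg0 γ) j := by
      apply le_mdl (continuous_lg0 hγ)
      intro k hk
      have hk' : -(j : ℤ) ≤ k ∧ k ≤ (j : ℤ) := abs_le.mp hk
      simp only [hψ, hζ, shiftZ_apply, bca, pat, mixW]
      split_ifs <;> first | rfl | omega | (exact congrArg w (Fin.ext (by simp only [Fin.val_mk]; omega)))
    have habs : |(lg0 γ (shiftZ (j : ℤ) (ζ j)) - lg0 γ (shiftZ (j : ℤ) (ζ (j + 1)))) - φ ψ|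
        ≤ |lg0 γ (shiftZ (j : ℤ) (ζ j)) - lg0 γ (bca a ψ (ψ 0))|
          + |lg0 γ (shiftZ (j : ℤ) (ζ (j + 1))) - lg0 γ (bca a ψ a)| := by
      rw [hφeq]
      have : (lg0 γ (shiftZ (j : ℤ) (ζ j)) - lg0 γ (shiftZ (j : ℤ) (ζ (j + 1))))
          - (lg0 γ (bca a ψ (ψ 0)) - lg0 γ (bca a ψ a))
          = (lg0 γ (shiftZ (j : ℤ) (ζ j)) - lg0 γ (bca a ψ (ψ 0)))
            - (lg0 γ (shiftZ (j : ℤ) (ζ (j + 1))) - lg0 γ (bca a ψ a)) := by ring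
      rw [this]
      exact abs_sub _ _
    unfold lg0 at habs hA1 hA2
    unfold lg0
    calc |Real.log (γ {0} (shiftZ (j:ℤ) (ζ j))) - Real.log (γ {0} (shiftZ (j:ℤ) (ζ (j+1))))
        - φ ψ| ≤ _ := habs
    _ ≤ mdl (lg0 γ) j + mdl (lg0 γ) j := add_le_add hA1 hA2
    _ = 2 * mdl (lg0 γ) j := by ring
  have hbirk : birk φ n (ζ 0) = ∑ j ∈ Finset.range n, φ (shiftZ (j : ℤ) (ζ 0)) := rfl
  rw [htel, hbirk, ← Finset.sum_sub_distrib]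
  calc |∑ j ∈ Finset.range n,
      (Real.log (γ (Λn n) (ζ j)) - Real.log (γ (Λn n) (ζ (j + 1))) - φ (shiftZ (j : ℤ) (ζ 0)))|
      ≤ ∑ j ∈ Finset.range n,
        |Real.log (γ (Λn n) (ζ j)) - Real.log (γ (Λn n) (ζ (j + 1))) - φ (shiftZ (j : ℤ) (ζ 0))| :=
        Finset.abs_sum_le_sum_abs _ _
  _ ≤ ∑ j ∈ Finset.range n, 2 * mdl (lg0 γ) j := by
      apply Finset.sum_le_sum
      intro j hj
      exact key j (Finset.mem_range.mp hj)
  _ = 2 * ∑ j ∈ Finset.range n, mdl (lg0 γ) j := by rw [Finset.mul_sum]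

end Telescope
section Pressure
variable {E : Type*} [Fintype E] [Nonempty E] [TopologicalSpace E] [DiscreteTopology E]
    [MeasurableSpace E] [MeasurableSingletonClass E]

lemma cylW_nonempty {n : ℕ} (w : Fin n → E) : (cylW w).Nonempty := by
  obtain ⟨x0⟩ := (inferInstance : Nonempty (Conf E))
  exact ⟨pat w x0, pat_mem_cylW w x0⟩

lemma cyl_agree {n : ℕ} {w : Fin n → E} {x y : Conf E} (hx : x ∈ cylW w) (hy : y ∈ cylW w) :
    ∀ k : ℤ, 0 ≤ k → k < (n : ℤ) → x k = y k := by
  intro k h0 h1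
  have hj : k.toNat < n := by omega
  have hfx := hx ⟨k.toNat, hj⟩
  have hfy := hy ⟨k.toNat, hj⟩
  have hc : ((k.toNat : ℕ) : ℤ) = k := by omega
  rw [hc] at hfx hfy
  rw [hfx, hfy]

lemma birk_add (φ : Conf E → ℝ) (m k : ℕ) (x : Conf E) :
    birk φ (m + k) x = birk φ m x + birk φ k (shiftZ (m : ℤ) x) := by
  induction k with
  | zero => simp [birk]
  | succ k ih =>
      have h1 : m + (k + 1) = (m + k) + 1 := by ring
      rw [h1]
      unfold birk at *
      rw [Finset.sum_range_succ, ih, Finset.sum_range_succ, shiftZ_shiftZ]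
      have : ((m + k : ℕ) : ℤ) = (k : ℤ) + (m : ℤ) := by push_cast; ring
      rw [this, add_assoc]

/-- weight of a cylinder -/
noncomputable def AW (φ : Conf E → ℝ) {n : ℕ} (w : Fin n → E) : ℝ :=
  sSup ((fun ω => Real.exp (birk φ n ω)) '' cylW w)

/-- partition function log -/
noncomputable def aSeq (φ : Conf E → ℝ) (n : ℕ) : ℝ :=
  Real.log (∑ w : Fin n → E, AW φ w)

lemma press_eq_limsup_aSeq (φ : Conf E → ℝ) :
    press φ = Filter.limsup (fun n : ℕ => aSeq φ n / n) Filter.atTop := rfl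

section BoundedPhi
variable {φ : Conf E → ℝ} {B : ℝ} (hB : ∀ ω, |φ ω| ≤ B)
include hB

lemma birk_bound (n : ℕ) (x : Conf E) : |birk φ n x| ≤ n * B := by
  unfold birk
  calc |∑ j ∈ Finset.range n, φ (shiftZ (j : ℤ) x)|
      ≤ ∑ j ∈ Finset.range n, |φ (shiftZ (j : ℤ) x)| := Finset.abs_sum_le_sum_abs _ _
  _ ≤ ∑ _j ∈ Finset.range n, B := Finset.sum_le_sum fun j _ => hB _
  _ = n * B := by rw [Finset.sum_const, Finset.card_range, nsmul_eq_mul]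

lemma AW_bddAbove {n : ℕ} (w : Fin n → E) :
    BddAbove ((fun ω => Real.exp (birk φ n ω)) '' cylW w) := by
  refine ⟨Real.exp (n * B), ?_⟩
  rintro x ⟨y, -, rfl⟩
  exact Real.exp_le_exp.mpr (le_of_abs_le (birk_bound hB n y))

lemma exp_birk_le_AW {n : ℕ} {w : Fin n → E} {x : Conf E} (hx : x ∈ cylW w) :
    Real.exp (birk φ n x) ≤ AW φ w :=
  le_csSup (AW_bddAbove hB w) ⟨x, hx, rfl⟩

lemma AW_pos {n : ℕ} (w : Fin n → E) : 0 < AW φ w := by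
  obtain ⟨x, hx⟩ := cylW_nonempty w
  exact lt_of_lt_of_le (Real.exp_pos _) (exp_birk_le_AW hB hx)

lemma AW_le_exp {n : ℕ} {w : Fin n → E} {x : Conf E} (hx : x ∈ cylW w) {V : ℝ}
    (hV : ∀ y ∈ cylW w, birk φ n y ≤ birk φ n x + V) :
    AW φ w ≤ Real.exp (birk φ n x + V) := by
  apply csSup_le ((cylW_nonempty w).image _)
  rintro z ⟨y, hy, rfl⟩
  exact Real.exp_le_exp.mpr (hV y hy)

lemma AW_append_le {m k : ℕ} (w : Fin m → E) (v : Fin k → E) :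
    AW φ (Fin.append w v) ≤ AW φ w * AW φ v := by
  apply csSup_le ((cylW_nonempty _).image _)
  rintro z ⟨x, hx, rfl⟩
  have hxw : x ∈ cylW w := by
    intro j
    have := hx (Fin.castAdd k j)
    rwa [Fin.append_left, Fin.coe_castAdd] at this
  have hxv : shiftZ (m : ℤ) x ∈ cylW v := by
    intro j
    have := hx (Fin.natAdd m j)
    rw [Fin.append_right, Fin.coe_natAdd] at this
    rw [shiftZ_apply]
    rw [← this]
    congr 1
    push_cast
    ring
  show Real.exp (birk φ (m + k) x) ≤ AW φ w * AW φ v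
  rw [birk_add φ m k x, Real.exp_add]
  exact mul_le_mul (exp_birk_le_AW hB hxw) (exp_birk_le_AW hB hxv)
    (le_of_lt (Real.exp_pos _)) (le_of_lt (AW_pos hB w))

lemma sum_AW_pos (n : ℕ) : 0 < ∑ w : Fin n → E, AW φ w :=
  Finset.sum_pos (fun w _ => AW_pos hB w) Finset.univ_nonempty

lemma aSeq_subadditive : Subadditive (aSeq φ) := by
  intro m k
  unfold aSeq
  have h1 : (∑ u : Fin (m + k) → E, AW φ u)
      = ∑ p : (Fin m → E) × (Fin k → E), AW φ (Fin.append p.1 p.2) :=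
    (Fintype.sum_equiv (Fin.appendEquiv m k) _ _ (fun p => rfl)).symm
  have h2 : (∑ p : (Fin m → E) × (Fin k → E), AW φ (Fin.append p.1 p.2))
      ≤ (∑ w : Fin m → E, AW φ w) * (∑ v : Fin k → E, AW φ v) := by
    rw [Finset.sum_mul_sum, ← Fintype.sum_prod_type']
    exact Finset.sum_le_sum fun p _ => AW_append_le hB p.1 p.2
  calc Real.log (∑ u : Fin (m + k) → E, AW φ u)
      = Real.log (∑ p : (Fin m → E) × (Fin k → E), AW φ (Fin.append p.1 p.2)) := by rw [h1]
  _ ≤ Real.log ((∑ w : Fin m → E, AW φ w) * (∑ v : Fin k → E, AW φ v)) :=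
      Real.log_le_log (by rw [← h1]; exact sum_AW_pos hB (m + k)) h2
  _ = Real.log (∑ w : Fin m → E, AW φ w) + Real.log (∑ v : Fin k → E, AW φ v) :=
      Real.log_mul (ne_of_gt (sum_AW_pos hB m)) (ne_of_gt (sum_AW_pos hB k))

lemma aSeq_div_bddBelow (hB0 : 0 ≤ B) : BddBelow (Set.range fun n : ℕ => aSeq φ n / n) := by
  refine ⟨-B, ?_⟩
  rintro x ⟨n, rfl⟩
  rcases Nat.eq_zero_or_pos n with hn | hn
  · subst hn; simp; linarith
  · have h1 : Real.exp (-(n * B)) ≤ ∑ w : Fin n → E, AW φ w := by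
      obtain ⟨x0⟩ := (inferInstance : Nonempty (Conf E))
      set w0 : Fin n → E := wordOf n x0
      calc Real.exp (-(n * B)) ≤ Real.exp (birk φ n x0) := by
            apply Real.exp_le_exp.mpr
            have := birk_bound hB n x0
            rw [abs_le] at this
            linarith [this.1]
      _ ≤ AW φ w0 := exp_birk_le_AW hB (self_mem_cylW n x0)
      _ ≤ ∑ w : Fin n → E, AW φ w :=
          Finset.single_le_sum (fun w _ => le_of_lt (AW_pos hB w)) (Finset.mem_univ _)
    have h2 : -((n : ℝ) * B) ≤ aSeq φ n := by
      calc -((n : ℝ) * B) = Real.log (Real.exp (-(n * B))) := (Real.log_exp _).symm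
      _ ≤ aSeq φ n := Real.log_le_log (Real.exp_pos _) h1
    show -B ≤ aSeq φ n / n
    rw [le_div_iff₀ (by exact_mod_cast hn)]
    nlinarith [h2]

lemma press_lim :
    Filter.Tendsto (fun n : ℕ => aSeq φ n / n) Filter.atTop (nhds (press φ)) := by
  have hB0 : 0 ≤ B := le_trans (abs_nonneg _) (hB (Classical.arbitrary _))
  have h := (aSeq_subadditive hB).tendsto_lim (aSeq_div_bddBelow hB hB0)
  have : press φ = (aSeq_subadditive hB).lim := by
    rw [press_eq_limsup_aSeq]
    exact h.limsup_eq
  rwa [this]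

end BoundedPhi
end Pressure
section Entropy
variable {E : Type*} [Fintype E] [Nonempty E] [TopologicalSpace E] [DiscreteTopology E]
    [MeasurableSpace E] [MeasurableSingletonClass E]

lemma toReal_le_one (ν : Measure (Conf E)) [IsProbabilityMeasure ν] (s : Set (Conf E)) :
    (ν s).toReal ≤ 1 := by
  have h : ν s ≤ 1 := prob_le_one
  exact ENNReal.toReal_le_of_le_ofReal zero_le_one (by simpa using h)

lemma map_shiftZ_pow (ν : Measure (Conf E)) (hν : ShiftInv ν) (m : ℕ) :
    Measure.map (shiftZ (m : ℤ)) ν = ν := by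
  induction m with
  | zero =>
      have : shiftZ (E := E) ((0 : ℕ) : ℤ) = id := by funext ω k; simp [shiftZ]
      rw [this, Measure.map_id]
  | succ m ih =>
      have hcomp : shiftZ (E := E) ((m + 1 : ℕ) : ℤ) = shiftZ (m : ℤ) ∘ shiftZ 1 := by
        funext ω
        rw [Function.comp_apply, shiftZ_shiftZ]
        norm_num
      rw [hcomp, ← Measure.map_map (measurable_shiftZ _) (measurable_shiftZ _), hν, ih]

lemma cylW_append_iff {m k : ℕ} (w : Fin m → E) (v : Fin k → E) (x : Conf E) :
    x ∈ cylW (Fin.append w v) ↔ x ∈ cylW w ∧ shiftZ (m : ℤ) x ∈ cylW v := by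
  constructor
  · intro hx
    constructor
    · intro j
      have := hx (Fin.castAdd k j)
      rwa [Fin.append_left, Fin.coe_castAdd] at this
    · intro j
      have := hx (Fin.natAdd m j)
      rw [Fin.append_right, Fin.coe_natAdd] at this
      rw [shiftZ_apply, ← this]
      congr 1
      push_cast
      ring
  · rintro ⟨h1, h2⟩
    intro i
    induction i using Fin.addCases with
    | left j =>
        rw [Fin.append_left, Fin.coe_castAdd]
        exact h1 j
    | right j =>
        rw [Fin.append_right, Fin.coe_natAdd]
        have := h2 j
        rw [shiftZ_apply] at this
        rw [← this]
        congr 1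
        push_cast
        ring

lemma measure_sum_right (ν : Measure (Conf E)) [IsProbabilityMeasure ν] {m : ℕ} (k : ℕ) (w : Fin m → E) :
    (ν (cylW w)).toReal = ∑ v : Fin k → E, (ν (cylW (Fin.append w v))).toReal := by
  have hU : cylW w = ⋃ v : Fin k → E, cylW (Fin.append w v) := by
    ext x
    simp only [Set.mem_iUnion]
    constructor
    · intro hx
      exact ⟨wordOf k (shiftZ (m : ℤ) x),
        (cylW_append_iff _ _ _).2 ⟨hx, self_mem_cylW _ _⟩⟩
    · rintro ⟨v, hv⟩
      exact ((cylW_append_iff w v x).1 hv).1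
  have hdisj : Pairwise (Function.onFun Disjoint
      fun v : Fin k → E => cylW (Fin.append w v)) := by
    intro v v' hne
    rw [Function.onFun, Set.disjoint_left]
    intro x hx hx'
    have h1 := ((cylW_append_iff w v x).1 hx).2
    have h2 := ((cylW_append_iff w v' x).1 hx').2
    exact hne (((mem_cylW_iff v _).1 h1).symm.trans ((mem_cylW_iff v' _).1 h2))
  rw [hU, MeasureTheory.measure_iUnion hdisj (fun v => measurableSet_cylW _), tsum_fintype,
    ENNReal.toReal_sum (fun v _ => measure_ne_top ν _)]

lemma measure_sum_left (ν : Measure (Conf E)) [IsProbabilityMeasure ν] (hν : ShiftInv ν) (m : ℕ) {k : ℕ}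
    (v : Fin k → E) :
    (∑ w : Fin m → E, (ν (cylW (Fin.append w v))).toReal) = (ν (cylW v)).toReal := by
  have hU : (shiftZ (m : ℤ))⁻¹' (cylW v) = ⋃ w : Fin m → E, cylW (Fin.append w v) := by
    ext x
    simp only [Set.mem_iUnion, Set.mem_preimage]
    constructor
    · intro hx
      exact ⟨wordOf m x, (cylW_append_iff _ _ _).2 ⟨self_mem_cylW _ _, hx⟩⟩
    · rintro ⟨w, hw⟩
      exact ((cylW_append_iff w v x).1 hw).2
  have hdisj : Pairwise (Function.onFun Disjoint
      fun w : Fin m → E => cylW (Fin.append w v)) := by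
    intro w w' hne
    rw [Function.onFun, Set.disjoint_left]
    intro x hx hx'
    have h1 := ((cylW_append_iff w v x).1 hx).1
    have h2 := ((cylW_append_iff w' v x).1 hx').1
    exact hne (((mem_cylW_iff w _).1 h1).symm.trans ((mem_cylW_iff w' _).1 h2))
  have hmap : ν ((shiftZ (m : ℤ))⁻¹' (cylW v)) = ν (cylW v) := by
    conv_rhs => rw [← map_shiftZ_pow ν hν m]
    rw [Measure.map_apply (measurable_shiftZ _) (measurableSet_cylW v)]
  rw [← hmap, hU, MeasureTheory.measure_iUnion hdisj (fun w => measurableSet_cylW _),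
    tsum_fintype, ENNReal.toReal_sum (fun w _ => measure_ne_top ν _)]

lemma entropy_subadd_aux {α β : Type*} [Fintype α] [Fintype β] [Nonempty α] [Nonempty β]
    (p : α → β → ℝ) (hp : ∀ a b, 0 ≤ p a b) (hsum : ∑ a, ∑ b, p a b = 1) :
    (-∑ a, ∑ b, p a b * Real.log (p a b)) ≤
      (-∑ a, (∑ b, p a b) * Real.log (∑ b, p a b))
      + (-∑ b, (∑ a, p a b) * Real.log (∑ a, p a b)) := by
  set r : α → ℝ := fun a => ∑ b, p a b with hr
  set q : β → ℝ := fun b => ∑ a, p a b with hq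
  have hrn : ∀ a, 0 ≤ r a := fun a => Finset.sum_nonneg fun b _ => hp a b
  have hqn : ∀ b, 0 ≤ q b := fun b => Finset.sum_nonneg fun a _ => hp a b
  have hqsum : ∑ b, q b = 1 := by rw [hq]; rw [Finset.sum_comm]; exact hsum
  have key : ∀ a b, p a b - r a * q b ≤
      p a b * Real.log (p a b) - p a b * Real.log (r a) - p a b * Real.log (q b) := by
    intro a b
    rcases lt_or_eq_of_le (hp a b) with hpos | hzero
    · have hr' : 0 < r a :=
        lt_of_lt_of_le hpos (Finset.single_le_sum (fun b' _ => hp a b') (Finset.mem_univ b))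
      have hq' : 0 < q b :=
        lt_of_lt_of_le hpos (Finset.single_le_sum (fun a' _ => hp a' b) (Finset.mem_univ a))
      have hlog : Real.log (r a * q b / p a b) ≤ r a * q b / p a b - 1 :=
        Real.log_le_sub_one_of_pos (by positivity)
      have h1 : Real.log (r a * q b / p a b)
          = Real.log (r a) + Real.log (q b) - Real.log (p a b) := by
        rw [Real.log_div (by positivity) (ne_of_gt hpos),
          Real.log_mul (ne_of_gt hr') (ne_of_gt hq')]
      rw [h1] at hlog
      have h2 : p a b * (Real.log (r a) + Real.log (q b) - Real.log (p a b))
          ≤ p a b * (r a * q b / p a b - 1) :=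
        mul_le_mul_of_nonneg_left hlog (le_of_lt hpos)
      have h3 : p a b * (r a * q b / p a b - 1) = r a * q b - p a b := by
        field_simp
      rw [h3] at h2
      nlinarith [h2]
    · rw [← hzero]
      simp only [zero_mul, zero_sub, sub_zero, zero_sub, neg_nonpos]
      have := mul_nonneg (hrn a) (hqn b)
      linarith
  have hsum2 : ∑ a, ∑ b, (p a b - r a * q b) = 0 := by
    have h1 : ∑ a, ∑ b, r a * q b = (∑ a, r a) * (∑ b, q b) := by
      rw [Finset.sum_mul_sum]
    have h2 : ∑ a, ∑ b, (p a b - r a * q b) = (∑ a, ∑ b, p a b) - ∑ a, ∑ b, r a * q b := by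
      rw [← Finset.sum_sub_distrib]
      apply Finset.sum_congr rfl
      intro a _
      rw [← Finset.sum_sub_distrib]
    have h3 : ∑ a, r a = 1 := hsum
    rw [h2, h1, h3, hqsum]
    ring
  have hsum3 : ∑ a, ∑ b, (p a b * Real.log (p a b) - p a b * Real.log (r a)
      - p a b * Real.log (q b))
      = (∑ a, ∑ b, p a b * Real.log (p a b)) - (∑ a, r a * Real.log (r a))
        - (∑ b, q b * Real.log (q b)) := by
    have e1 : ∀ a, ∑ b, p a b * Real.log (r a) = r a * Real.log (r a) := by
      intro a
      rw [← Finset.sum_mul]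
    have e2 : ∑ a, ∑ b, p a b * Real.log (q b) = ∑ b, q b * Real.log (q b) := by
      rw [Finset.sum_comm]
      apply Finset.sum_congr rfl
      intro b _
      rw [← Finset.sum_mul]
    calc ∑ a, ∑ b, (p a b * Real.log (p a b) - p a b * Real.log (r a)
        - p a b * Real.log (q b))
        = ∑ a, ((∑ b, p a b * Real.log (p a b)) - (∑ b, p a b * Real.log (r a))
          - (∑ b, p a b * Real.log (q b))) := by
          apply Finset.sum_congr rfl
          intro a _
          rw [← Finset.sum_sub_distrib, ← Finset.sum_sub_distrib]
    _ = (∑ a, ∑ b, p a b * Real.log (p a b)) - (∑ a, ∑ b, p a b * Real.log (r a))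
        - (∑ a, ∑ b, p a b * Real.log (q b)) := by
          rw [Finset.sum_sub_distrib, Finset.sum_sub_distrib]
    _ = (∑ a, ∑ b, p a b * Real.log (p a b)) - (∑ a, r a * Real.log (r a))
        - (∑ b, q b * Real.log (q b)) := by
          rw [show (∑ a, ∑ b, p a b * Real.log (r a)) = ∑ a, r a * Real.log (r a) from
            Finset.sum_congr rfl fun a _ => e1 a, e2]
  have hfin : (0 : ℝ) ≤ (∑ a, ∑ b, p a b * Real.log (p a b)) - (∑ a, r a * Real.log (r a))
      - (∑ b, q b * Real.log (q b)) := by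
    rw [← hsum3, ← hsum2]
    apply Finset.sum_le_sum
    intro a _
    apply Finset.sum_le_sum
    intro b _
    exact key a b
  have : (∑ a, (∑ b, p a b) * Real.log (∑ b, p a b)) = ∑ a, r a * Real.log (r a) := rfl
  rw [this]
  have : (∑ b, (∑ a, p a b) * Real.log (∑ a, p a b)) = ∑ b, q b * Real.log (q b) := rfl
  rw [this]
  linarith

/-- finite-volume entropy -/
noncomputable def Hseq (τ : Measure (Conf E)) (n : ℕ) : ℝ :=
  -∑ w : Fin n → E, (τ (cylW w)).toReal * Real.log (τ (cylW w)).toReal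

lemma ent_eq_limsup (τ : Measure (Conf E)) :
    ent τ = Filter.limsup (fun n : ℕ => Hseq τ n / n) Filter.atTop := rfl

lemma Hseq_nonneg (τ : Measure (Conf E)) [IsProbabilityMeasure τ] (n : ℕ) : 0 ≤ Hseq τ n := by
  unfold Hseq
  rw [← Finset.sum_neg_distrib]
  apply Finset.sum_nonneg
  intro w _
  have h1 : Real.log (τ (cylW w)).toReal ≤ 0 :=
    Real.log_nonpos ENNReal.toReal_nonneg (toReal_le_one τ _)
  nlinarith [ENNReal.toReal_nonneg (a := τ (cylW w))]

lemma Hseq_subadditive (τ : Measure (Conf E)) [IsProbabilityMeasure τ] (hτi : ShiftInv τ) :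
    Subadditive (Hseq τ) := by
  intro m k
  have hp : ∀ (w : Fin m → E) (v : Fin k → E), 0 ≤ (τ (cylW (Fin.append w v))).toReal :=
    fun w v => ENNReal.toReal_nonneg
  have hsum : ∑ w : Fin m → E, ∑ v : Fin k → E, (τ (cylW (Fin.append w v))).toReal = 1 := by
    have : ∀ w : Fin m → E, ∑ v : Fin k → E, (τ (cylW (Fin.append w v))).toReal
        = (τ (cylW w)).toReal := fun w => (measure_sum_right τ k w).symm
    rw [Finset.sum_congr rfl (fun w _ => this w)]
    exact sum_measure_cylW τ m
  have haux := entropy_subadd_aux (fun w v => (τ (cylW (Fin.append w v))).toReal) hp hsum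
  have hmargr : ∀ w : Fin m → E, (∑ v : Fin k → E, (τ (cylW (Fin.append w v))).toReal)
      = (τ (cylW w)).toReal := fun w => (measure_sum_right τ k w).symm
  have hmargl : ∀ v : Fin k → E, (∑ w : Fin m → E, (τ (cylW (Fin.append w v))).toReal)
      = (τ (cylW v)).toReal := fun v => measure_sum_left τ hτi m v
  simp only [hmargr, hmargl] at haux
  have hH : Hseq τ (m + k)
      = -∑ w : Fin m → E, ∑ v : Fin k → E,
          (τ (cylW (Fin.append w v))).toReal * Real.log (τ (cylW (Fin.append w v))).toReal := by
    unfold Hseq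
    congr 1
    calc ∑ u : Fin (m + k) → E, (τ (cylW u)).toReal * Real.log (τ (cylW u)).toReal
        = ∑ p : (Fin m → E) × (Fin k → E), (τ (cylW (Fin.append p.1 p.2))).toReal
            * Real.log (τ (cylW (Fin.append p.1 p.2))).toReal :=
          (Fintype.sum_equiv (Fin.appendEquiv m k)
            (fun p => (τ (cylW (Fin.append p.1 p.2))).toReal
              * Real.log (τ (cylW (Fin.append p.1 p.2))).toReal)
            (fun u => (τ (cylW u)).toReal * Real.log (τ (cylW u)).toReal)
            (fun p => rfl)).symm
    _ = ∑ w : Fin m → E, ∑ v : Fin k → E, (τ (cylW (Fin.append w v))).toReal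
          * Real.log (τ (cylW (Fin.append w v))).toReal := Fintype.sum_prod_type _
  rw [hH]
  exact haux

lemma Hseq_div_bddBelow (τ : Measure (Conf E)) [IsProbabilityMeasure τ] :
    BddBelow (Set.range fun n : ℕ => Hseq τ n / n) := by
  refine ⟨0, ?_⟩
  rintro x ⟨n, rfl⟩
  exact div_nonneg (Hseq_nonneg τ n) (Nat.cast_nonneg n)

lemma ent_lim (τ : Measure (Conf E)) [IsProbabilityMeasure τ] (hτi : ShiftInv τ) :
    Filter.Tendsto (fun n : ℕ => Hseq τ n / n) Filter.atTop (nhds (ent τ)) := by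
  have h := (Hseq_subadditive τ hτi).tendsto_lim (Hseq_div_bddBelow τ)
  have : ent τ = (Hseq_subadditive τ hτi).lim := by
    rw [ent_eq_limsup]
    exact h.limsup_eq
  rwa [this]

end Entropy
section Estimates
variable {E : Type*} [Fintype E] [Nonempty E] [TopologicalSpace E] [DiscreteTopology E]
    [MeasurableSpace E] [MeasurableSingletonClass E]
variable {γ : Finset ℤ → Conf E → ℝ}

/-- cumulative modulus for `φ` -/
noncomputable def VS (γ : Finset ℤ → Conf E → ℝ) (a : E) (n : ℕ) : ℝ :=
  ∑ i ∈ Finset.range n, mdl (phiOf γ a) i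

/-- cumulative modulus for `log γ₀` -/
noncomputable def DS (γ : Finset ℤ → Conf E → ℝ) (n : ℕ) : ℝ :=
  2 * ∑ j ∈ Finset.range n, mdl (lg0 γ) j

lemma VS_nonneg (hγ : IsGibbsSpec γ) (a : E) (n : ℕ) : 0 ≤ VS γ a n :=
  Finset.sum_nonneg fun i _ => mdl_nonneg (continuous_phiOf hγ a) i

lemma DS_nonneg (hγ : IsGibbsSpec γ) (n : ℕ) : 0 ≤ DS γ n := by
  have := Finset.sum_nonneg (fun j (_ : j ∈ Finset.range n) => mdl_nonneg (continuous_lg0 hγ) j)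
  unfold DS; linarith

lemma VS_div_tendsto (hγ : IsGibbsSpec γ) (a : E) :
    Filter.Tendsto (fun n : ℕ => VS γ a n / n) Filter.atTop (nhds 0) := by
  have h := (tendsto_mdl (continuous_phiOf hγ a)).cesaro
  simpa [VS, div_eq_inv_mul] using h

lemma DS_div_tendsto (hγ : IsGibbsSpec γ) :
    Filter.Tendsto (fun n : ℕ => DS γ n / n) Filter.atTop (nhds 0) := by
  have h := (tendsto_mdl (continuous_lg0 hγ)).cesaro
  have h2 := h.const_mul (2 : ℝ)
  simp only [mul_zero] at h2
  have : (fun n : ℕ => DS γ n / n) = fun n : ℕ => 2 * ((n : ℝ)⁻¹ * ∑ j ∈ Finset.range n, mdl (lg0 γ) j) := by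
    funext n
    rw [div_eq_inv_mul]
    unfold DS
    ring
  rw [this]
  exact h2

lemma birk_cyl_bound (hγ : IsGibbsSpec γ) (a : E) {n : ℕ} {w : Fin n → E} {x y : Conf E}
    (hx : x ∈ cylW w) (hy : y ∈ cylW w) :
    birk (phiOf γ a) n y ≤ birk (phiOf γ a) n x + VS γ a n := by
  have h := birk_agree hγ a n y x (fun k h0 h1 => cyl_agree hy hx k h0 h1)
  rw [abs_le] at h
  unfold VS
  linarith [h.2]

section WithBound
variable {a : E} {B : ℝ} (hγ : IsGibbsSpec γ) (hB : ∀ ω, |phiOf γ a ω| ≤ B)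
include hγ hB

lemma log_AW_bounds {n : ℕ} {w : Fin n → E} {x : Conf E} (hx : x ∈ cylW w) :
    birk (phiOf γ a) n x ≤ Real.log (AW (phiOf γ a) w) ∧
      Real.log (AW (phiOf γ a) w) ≤ birk (phiOf γ a) n x + VS γ a n := by
  constructor
  · have h := exp_birk_le_AW hB hx
    have := Real.log_le_log (Real.exp_pos _) h
    rwa [Real.log_exp] at this
  · have h := AW_le_exp hB hx (V := VS γ a n) (fun y hy => birk_cyl_bound hγ a hx hy)
    have := Real.log_le_log (AW_pos hB w) h
    rwa [Real.log_exp] at this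

/-- the fundamental estimate on the measure of cylinders -/
lemma log_mu_est {μ : Measure (Conf E)} (hμ : IsDLRGibbs γ μ) (hTI : SpecTI γ)
    (n : ℕ) (w : Fin n → E) :
    0 < (μ (cylW w)).toReal ∧
    |Real.log (μ (cylW w)).toReal - (Real.log (AW (phiOf γ a) w) - aSeq (phiOf γ a) n)| ≤
      2 * (DS γ n + VS γ a n) := by
  haveI : IsProbabilityMeasure μ := hμ.1
  set φ := phiOf γ a with hφ
  set c : ℝ := DS γ n + VS γ a n with hc
  have hc0 : 0 ≤ c := add_nonneg (DS_nonneg hγ n) (VS_nonneg hγ a n)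
  clear_value c
  -- pointwise two-sided bound on γ_Λ(pat w' η) for any word w'
  have hpoint : ∀ (w' : Fin n → E) (η : Conf E),
      γ (Λn n) (pat (fun _ : Fin n => a) η) * AW φ w' * Real.exp (-c) ≤ γ (Λn n) (pat w' η) ∧
      γ (Λn n) (pat w' η) ≤ γ (Λn n) (pat (fun _ : Fin n => a) η) * AW φ w' * Real.exp c := by
    intro w' η
    have htel := telescope hγ hTI a n w' η
    rw [abs_le] at htel
    have hAW := log_AW_bounds hγ hB (pat_mem_cylW w' η)
    have hgpos := gamma_pos hγ.2.1 (Λn n) (pat w' η)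
    have hzpos := gamma_pos hγ.2.1 (Λn n) (pat (fun _ : Fin n => a) η)
    have hDS : (2 : ℝ) * ∑ j ∈ Finset.range n, mdl (lg0 γ) j = DS γ n := rfl
    have hVS : VS γ a n = VS γ a n := rfl
    have hlow : Real.log (γ (Λn n) (pat (fun _ : Fin n => a) η)) + Real.log (AW φ w') - c ≤
        Real.log (γ (Λn n) (pat w' η)) := by
      have := htel.1
      rw [hDS] at this
      have h2 := hAW.2
      simp only [hc]
      linarith
    have hhigh : Real.log (γ (Λn n) (pat w' η)) ≤
        Real.log (γ (Λn n) (pat (fun _ : Fin n => a) η)) + Real.log (AW φ w') + c := by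
      have := htel.2
      rw [hDS] at this
      have h1 := hAW.1
      simp only [hc]
      have hd := DS_nonneg hγ n
      have hv := VS_nonneg hγ a n
      linarith
    constructor
    · have : Real.exp (Real.log (γ (Λn n) (pat (fun _ : Fin n => a) η)) + Real.log (AW φ w') - c)
          ≤ Real.exp (Real.log (γ (Λn n) (pat w' η))) := Real.exp_le_exp.mpr hlow
      rwa [Real.exp_log hgpos, Real.exp_sub, Real.exp_add, Real.exp_log hzpos,
        Real.exp_log (AW_pos hB w'), div_eq_mul_inv, ← Real.exp_neg] at this
    · have : Real.exp (Real.log (γ (Λn n) (pat w' η)))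
          ≤ Real.exp (Real.log (γ (Λn n) (pat (fun _ : Fin n => a) η)) + Real.log (AW φ w') + c) :=
        Real.exp_le_exp.mpr hhigh
      rwa [Real.exp_log hgpos, Real.exp_add, Real.exp_add, Real.exp_log hzpos,
        Real.exp_log (AW_pos hB w')] at this
  -- integrate
  have hintZ : MeasureTheory.Integrable (fun η => γ (Λn n) (pat (fun _ : Fin n => a) η)) μ :=
    integrable_of_continuous ((hγ.2.2 (Λn n)).comp (continuous_pat _)) μ
  have hintG : ∀ w' : Fin n → E, MeasureTheory.Integrable (fun η => γ (Λn n) (pat w' η)) μ :=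
    fun w' => integrable_of_continuous ((hγ.2.2 (Λn n)).comp (continuous_pat _)) μ
  set ZI : ℝ := ∫ η, γ (Λn n) (pat (fun _ : Fin n => a) η) ∂μ with hZI
  have hZIpos : 0 < ZI := by
    obtain ⟨c0, hc0', hcle⟩ := hγ.2.1 (Λn n)
    have : (c0 : ℝ) = ∫ _η, c0 ∂μ := by simp
    rw [hZI]
    calc (0:ℝ) < c0 := hc0'
    _ = ∫ _η, c0 ∂μ := this
    _ ≤ ∫ η, γ (Λn n) (pat (fun _ : Fin n => a) η) ∂μ :=
        MeasureTheory.integral_mono (MeasureTheory.integrable_const c0) hintZ (fun η => hcle _)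
  have hmu : ∀ w' : Fin n → E, (μ (cylW w')).toReal = ∫ η, γ (Λn n) (pat w' η) ∂μ :=
    fun w' => mu_cylW_eq hμ w'
  have hint2 : ∀ w' : Fin n → E,
      ZI * AW φ w' * Real.exp (-c) ≤ (μ (cylW w')).toReal ∧
      (μ (cylW w')).toReal ≤ ZI * AW φ w' * Real.exp c := by
    intro w'
    constructor
    · rw [hmu w']
      have : ZI * AW φ w' * Real.exp (-c)
          = ∫ η, γ (Λn n) (pat (fun _ : Fin n => a) η) * AW φ w' * Real.exp (-c) ∂μ := by
        rw [hZI, ← MeasureTheory.integral_mul_const, ← MeasureTheory.integral_mul_const]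
      rw [this]
      exact MeasureTheory.integral_mono ((hintZ.mul_const _).mul_const _) (hintG w')
        (fun η => (hpoint w' η).1)
    · rw [hmu w']
      have : ZI * AW φ w' * Real.exp c
          = ∫ η, γ (Λn n) (pat (fun _ : Fin n => a) η) * AW φ w' * Real.exp c ∂μ := by
        rw [hZI, ← MeasureTheory.integral_mul_const, ← MeasureTheory.integral_mul_const]
      rw [this]
      exact MeasureTheory.integral_mono (hintG w') ((hintZ.mul_const _).mul_const _)
        (fun η => (hpoint w' η).2)
  clear_value ZI
  set SA : ℝ := ∑ w' : Fin n → E, AW φ w' with hSA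
  have hSApos : 0 < SA := sum_AW_pos hB n
  have haseq : aSeq φ n = Real.log SA := rfl
  have hone : ∑ w' : Fin n → E, (μ (cylW w')).toReal = 1 := sum_measure_cylW μ n
  have hsum_low : ZI * SA * Real.exp (-c) ≤ 1 := by
    rw [← hone]
    calc ZI * SA * Real.exp (-c) = ∑ w' : Fin n → E, ZI * AW φ w' * Real.exp (-c) := by
          rw [hSA, Finset.mul_sum, Finset.sum_mul]
    _ ≤ ∑ w' : Fin n → E, (μ (cylW w')).toReal :=
        Finset.sum_le_sum fun w' _ => (hint2 w').1
  have hsum_high : 1 ≤ ZI * SA * Real.exp c := by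
    rw [← hone]
    calc ∑ w' : Fin n → E, (μ (cylW w')).toReal
        ≤ ∑ w' : Fin n → E, ZI * AW φ w' * Real.exp c :=
        Finset.sum_le_sum fun w' _ => (hint2 w').2
    _ = ZI * SA * Real.exp c := by rw [hSA, Finset.mul_sum, Finset.sum_mul]
  clear_value SA
  -- deduce bounds on μ_w
  have hmupos : 0 < (μ (cylW w)).toReal :=
    lt_of_lt_of_le (mul_pos (mul_pos hZIpos (AW_pos hB w)) (Real.exp_pos _)) (hint2 w).1
  refine ⟨hmupos, ?_⟩
  have hup : (μ (cylW w)).toReal ≤ AW φ w / SA * Real.exp (2 * c) := by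
    have hZIle : ZI ≤ Real.exp c / SA := by
      rw [div_eq_mul_inv]
      have h1 : ZI * SA ≤ Real.exp c := by
        calc ZI * SA = ZI * SA * Real.exp (-c) * Real.exp c := by
              rw [mul_assoc, ← Real.exp_add]; simp
        _ ≤ 1 * Real.exp c :=
            mul_le_mul_of_nonneg_right hsum_low (le_of_lt (Real.exp_pos c))
        _ = Real.exp c := one_mul _
      calc ZI = ZI * SA * SA⁻¹ := by field_simp
      _ ≤ Real.exp c * SA⁻¹ := by
          apply mul_le_mul_of_nonneg_right h1
          positivity
    calc (μ (cylW w)).toReal ≤ ZI * AW φ w * Real.exp c := (hint2 w).2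
    _ ≤ (Real.exp c / SA) * AW φ w * Real.exp c := by
        apply mul_le_mul_of_nonneg_right _ (le_of_lt (Real.exp_pos c))
        exact mul_le_mul_of_nonneg_right hZIle (le_of_lt (AW_pos hB w))
    _ = AW φ w / SA * Real.exp (2 * c) := by
        rw [two_mul, Real.exp_add]
        ring
  have hdown : AW φ w / SA * Real.exp (-(2 * c)) ≤ (μ (cylW w)).toReal := by
    have hZIge : Real.exp (-c) / SA ≤ ZI := by
      have h1 : Real.exp (-c) ≤ ZI * SA := by
        calc Real.exp (-c) = 1 * Real.exp (-c) := (one_mul _).symm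
        _ ≤ ZI * SA * Real.exp c * Real.exp (-c) :=
            mul_le_mul_of_nonneg_right hsum_high (le_of_lt (Real.exp_pos _))
        _ = ZI * SA := by rw [mul_assoc, ← Real.exp_add]; simp
      rw [div_le_iff₀ hSApos]
      linarith
    calc AW φ w / SA * Real.exp (-(2 * c))
        = (Real.exp (-c) / SA) * AW φ w * Real.exp (-c) := by
          rw [show -(2*c) = -c + -c by ring, Real.exp_add]
          ring
    _ ≤ ZI * AW φ w * Real.exp (-c) := by
        apply mul_le_mul_of_nonneg_right _ (le_of_lt (Real.exp_pos _))
        exact mul_le_mul_of_nonneg_right hZIge (le_of_lt (AW_pos hB w))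
    _ ≤ (μ (cylW w)).toReal := (hint2 w).1
  -- take logs
  have hAWpos := AW_pos hB w
  have hlog1 : Real.log (μ (cylW w)).toReal ≤ Real.log (AW φ w) - Real.log SA + 2 * c := by
    have := Real.log_le_log hmupos hup
    rwa [Real.log_mul (by positivity) (ne_of_gt (Real.exp_pos _)), Real.log_div
      (ne_of_gt hAWpos) (ne_of_gt hSApos), Real.log_exp] at this
  have hlog2 : Real.log (AW φ w) - Real.log SA - 2 * c ≤ Real.log (μ (cylW w)).toReal := by
    have := Real.log_le_log (by positivity) hdown
    rwa [Real.log_mul (by positivity) (ne_of_gt (Real.exp_pos _)), Real.log_div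
      (ne_of_gt hAWpos) (ne_of_gt hSApos), Real.log_exp] at this
  rw [haseq, abs_le]
  constructor <;> linarith

end WithBound
end Estimates
section TauIntegrals
variable {E : Type*} [Fintype E] [Nonempty E] [TopologicalSpace E] [DiscreteTopology E]
    [MeasurableSpace E] [MeasurableSingletonClass E]
variable {γ : Finset ℤ → Conf E → ℝ}

lemma continuous_birk {φ : Conf E → ℝ} (hφc : Continuous φ) (n : ℕ) :
    Continuous (birk φ n) := by
  unfold birk
  exact continuous_finset_sum _ fun j _ => hφc.comp (continuous_shiftZ _)

lemma integral_birk {φ : Conf E → ℝ} (hφc : Continuous φ) (τ : Measure (Conf E))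
    [IsProbabilityMeasure τ] (hτi : ShiftInv τ) (n : ℕ) :
    ∫ ω, birk φ n ω ∂τ = n * ∫ ω, φ ω ∂τ := by
  unfold birk
  rw [MeasureTheory.integral_finset_sum (Finset.range n)
    (f := fun (k : ℕ) (ω : Conf E) => φ (shiftZ (k : ℤ) ω))
    (fun j _ => integrable_of_continuous (hφc.comp (continuous_shiftZ _)) τ)]
  have : ∀ j : ℕ, ∫ ω, φ (shiftZ (j : ℤ) ω) ∂τ = ∫ ω, φ ω ∂τ := by
    intro j
    conv_rhs => rw [← map_shiftZ_pow τ hτi j]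
    rw [MeasureTheory.integral_map (measurable_shiftZ _).aemeasurable]
    exact hφc.aestronglyMeasurable
  rw [Finset.sum_congr rfl (fun j _ => this j), Finset.sum_const, Finset.card_range,
    nsmul_eq_mul]

lemma sum_t_logAW_close {a : E} {B : ℝ} (hγ : IsGibbsSpec γ) (hB : ∀ ω, |phiOf γ a ω| ≤ B)
    (τ : Measure (Conf E)) [IsProbabilityMeasure τ] (hτi : ShiftInv τ) (n : ℕ) :
    |(∑ w : Fin n → E, (τ (cylW w)).toReal * Real.log (AW (phiOf γ a) w))
      - n * ∫ ω, phiOf γ a ω ∂τ| ≤ VS γ a n := by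
  set φ := phiOf γ a with hφ
  have hφc : Continuous φ := continuous_phiOf hγ a
  have hbint : MeasureTheory.Integrable (birk φ n) τ :=
    integrable_of_continuous (continuous_birk hφc n) τ
  -- split the integral of birk over cylinders
  have hsplit : ∫ ω, birk φ n ω ∂τ
      = ∑ w : Fin n → E, ∫ x in cylW w, birk φ n x ∂τ := by
    have hU : (⋃ w ∈ (Finset.univ : Finset (Fin n → E)), cylW w) = Set.univ := by
      apply Set.eq_univ_of_forall
      intro x
      simp only [Set.mem_iUnion]
      exact ⟨wordOf n x, Finset.mem_univ _, self_mem_cylW n x⟩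
    rw [← MeasureTheory.setIntegral_univ, ← hU]
    exact MeasureTheory.integral_biUnion_finset Finset.univ
      (fun w _ => measurableSet_cylW w)
      ((cylW_pairwise_disjoint n).set_pairwise _)
      (fun w _ => hbint.integrableOn)
  -- per-cylinder estimate
  have hper : ∀ w : Fin n → E,
      |(τ (cylW w)).toReal * Real.log (AW φ w) - ∫ x in cylW w, birk φ n x ∂τ|
        ≤ VS γ a n * (τ (cylW w)).toReal := by
    intro w
    have hsub : ∫ x in cylW w, (birk φ n x - Real.log (AW φ w)) ∂τ
        = (∫ x in cylW w, birk φ n x ∂τ) - (τ (cylW w)).toReal * Real.log (AW φ w) := by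
      rw [MeasureTheory.integral_sub hbint.integrableOn
        (MeasureTheory.integrableOn_const (measure_lt_top τ _).ne)]
      rw [MeasureTheory.setIntegral_const, smul_eq_mul]; rfl
    have hbound := MeasureTheory.norm_setIntegral_le_of_norm_le_const
      (f := fun x => birk φ n x - Real.log (AW φ w)) (s := cylW w) (μ := τ)
      (C := VS γ a n) (measure_lt_top τ _)
      (fun x hx => by
        show ‖birk φ n x - Real.log (AW φ w)‖ ≤ VS γ a n
        have h := log_AW_bounds hγ hB hx
        rw [Real.norm_eq_abs, abs_le]
        constructor
        · linarith [h.2]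
        · have := VS_nonneg hγ a n
          linarith [h.1])
    rw [hsub, Real.norm_eq_abs] at hbound
    calc |(τ (cylW w)).toReal * Real.log (AW φ w) - ∫ x in cylW w, birk φ n x ∂τ|
        = |(∫ x in cylW w, birk φ n x ∂τ) - (τ (cylW w)).toReal * Real.log (AW φ w)| := by
          rw [abs_sub_comm]
    _ ≤ VS γ a n * (τ (cylW w)).toReal := hbound
  calc |(∑ w : Fin n → E, (τ (cylW w)).toReal * Real.log (AW φ w)) - n * ∫ ω, φ ω ∂τ|
      = |∑ w : Fin n → E, ((τ (cylW w)).toReal * Real.log (AW φ w)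
          - ∫ x in cylW w, birk φ n x ∂τ)| := by
        rw [Finset.sum_sub_distrib, ← hsplit, integral_birk hφc τ hτi n]
  _ ≤ ∑ w : Fin n → E, |(τ (cylW w)).toReal * Real.log (AW φ w)
        - ∫ x in cylW w, birk φ n x ∂τ| := Finset.abs_sum_le_sum_abs _ _
  _ ≤ ∑ w : Fin n → E, VS γ a n * (τ (cylW w)).toReal :=
      Finset.sum_le_sum fun w _ => hper w
  _ = VS γ a n := by
      rw [← Finset.mul_sum, sum_measure_cylW τ n, mul_one]

end TauIntegrals
section LimitHelpers

lemma rat_tendsto_one : Filter.Tendsto (fun n : ℕ => ((n : ℝ) + 1) / n) Filter.atTop (nhds 1) := by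
  have h1 : Filter.Tendsto (fun n : ℕ => 1 + 1 / (n : ℝ)) Filter.atTop (nhds (1 + 0)) :=
    tendsto_const_nhds.add tendsto_one_div_atTop_nhds_zero_nat
  rw [add_zero] at h1
  apply h1.congr'
  filter_upwards [Filter.eventually_ge_atTop 1] with n hn
  have hn' : (n : ℝ) ≠ 0 := ne_of_gt (by exact_mod_cast hn)
  field_simp

lemma shift_div_tendsto {u : ℕ → ℝ} {L : ℝ}
    (h : Filter.Tendsto (fun n : ℕ => u n / n) Filter.atTop (nhds L)) :
    Filter.Tendsto (fun n : ℕ => u (n + 1) / n) Filter.atTop (nhds L) := by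
  have h1 := h.comp (Filter.tendsto_add_atTop_nat 1)
  have h2 := h1.mul rat_tendsto_one
  rw [mul_one] at h2
  apply h2.congr'
  filter_upwards [Filter.eventually_ge_atTop 1] with n hn
  have hn' : (n : ℝ) ≠ 0 := ne_of_gt (by exact_mod_cast hn)
  have hn1 : ((n + 1 : ℕ) : ℝ) = (n : ℝ) + 1 := by push_cast; ring
  show u (n + 1) / ((n + 1 : ℕ) : ℝ) * (((n : ℝ) + 1) / n) = u (n + 1) / n
  rw [hn1]
  have h2' : (n : ℝ) + 1 ≠ 0 := by positivity
  field_simp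

end LimitHelpers
/-- For `μ ∈ G_S(γ)` and any shift-invariant Borel probability measure
`τ`, the specific relative entropy `h(τ|μ) = lim_n (1/n) H_n(τ|μ)` exists and equals
`P(φ_γ) - h(τ) - ∫ φ_γ dτ`. -/
theorem specific_relative_entropy_formula [Fintype E] [Nonempty E] [TopologicalSpace E] [DiscreteTopology E]
    [MeasurableSpace E] [MeasurableSingletonClass E]
    (γ : Finset ℤ → Conf E → ℝ) (hγ : IsGibbsSpec γ) (hTI : SpecTI γ) (a : E)
    (μ : Measure (Conf E)) (hμ : IsDLRGibbs γ μ) (hinv : ShiftInv μ)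
    (τ : Measure (Conf E)) (hτp : IsProbabilityMeasure τ) (hτi : ShiftInv τ) :
    Tendsto (fun n : ℕ => relEntN τ μ n / n) atTop
      (𝓝 (press (phiOf γ a) - ent τ - ∫ ω, phiOf γ a ω ∂τ)) := by
  haveI : IsProbabilityMeasure τ := hτp
  haveI : IsProbabilityMeasure μ := hμ.1
  set φ := phiOf γ a with hφdef
  -- global bound on φ
  obtain ⟨x0⟩ := (inferInstance : Nonempty (Conf E))
  obtain ⟨z, -, hz⟩ := isCompact_univ.exists_isMaxOn ⟨x0, trivial⟩
    (continuous_phiOf hγ a).abs.continuousOn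
  have hB : ∀ ω, |φ ω| ≤ |φ z| := fun ω => hz (Set.mem_univ ω)
  set I : ℝ := ∫ ω, φ ω ∂τ with hI
  have hmu_est := fun (n : ℕ) (w : Fin n → E) => log_mu_est hγ hB hμ hTI n w
  -- E1 : decomposition of relEntN
  have E1 : ∀ n : ℕ, relEntN τ μ n = -Hseq τ (n + 1)
      - ∑ w : Fin (n + 1) → E, (τ (cylW w)).toReal * Real.log (μ (cylW w)).toReal := by
    intro n
    unfold relEntN Hseq
    rw [neg_neg, ← Finset.sum_sub_distrib]
    apply Finset.sum_congr rfl
    intro w _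
    rcases eq_or_lt_of_le (ENNReal.toReal_nonneg (a := τ (cylW w))) with h0 | hpos
    · rw [← h0]; simp
    · rw [Real.log_div (ne_of_gt hpos) (ne_of_gt (hmu_est (n + 1) w).1)]
      ring
  -- E2 : replace log μ by log AW - aSeq
  have E2 : ∀ n : ℕ,
      |(∑ w : Fin (n + 1) → E, (τ (cylW w)).toReal * Real.log (μ (cylW w)).toReal)
        - ((∑ w : Fin (n + 1) → E, (τ (cylW w)).toReal * Real.log (AW φ w))
            - aSeq φ (n + 1))|
        ≤ 2 * (DS γ (n + 1) + VS γ a (n + 1)) := by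
    intro n
    have hsum1 : ∑ w : Fin (n + 1) → E, (τ (cylW w)).toReal = 1 := sum_measure_cylW τ (n + 1)
    have hexp : (∑ w : Fin (n + 1) → E, (τ (cylW w)).toReal * Real.log (μ (cylW w)).toReal)
        - ((∑ w : Fin (n + 1) → E, (τ (cylW w)).toReal * Real.log (AW φ w)) - aSeq φ (n + 1))
        = ∑ w : Fin (n + 1) → E, (τ (cylW w)).toReal
            * (Real.log (μ (cylW w)).toReal - (Real.log (AW φ w) - aSeq φ (n + 1))) := by
      have h1 : ∀ w : Fin (n + 1) → E, (τ (cylW w)).toReal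
          * (Real.log (μ (cylW w)).toReal - (Real.log (AW φ w) - aSeq φ (n + 1)))
          = (τ (cylW w)).toReal * Real.log (μ (cylW w)).toReal
            - (τ (cylW w)).toReal * Real.log (AW φ w)
            + (τ (cylW w)).toReal * aSeq φ (n + 1) := fun w => by ring
      rw [Finset.sum_congr rfl (fun w _ => h1 w), Finset.sum_add_distrib,
        Finset.sum_sub_distrib, ← Finset.sum_mul, hsum1, one_mul]
      ring
    rw [hexp]
    calc |∑ w : Fin (n + 1) → E, (τ (cylW w)).toReal
          * (Real.log (μ (cylW w)).toReal - (Real.log (AW φ w) - aSeq φ (n + 1)))|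
        ≤ ∑ w : Fin (n + 1) → E, |(τ (cylW w)).toReal
            * (Real.log (μ (cylW w)).toReal - (Real.log (AW φ w) - aSeq φ (n + 1)))| :=
          Finset.abs_sum_le_sum_abs _ _
    _ ≤ ∑ w : Fin (n + 1) → E, (τ (cylW w)).toReal * (2 * (DS γ (n + 1) + VS γ a (n + 1))) := by
        apply Finset.sum_le_sum
        intro w _
        rw [abs_mul, abs_of_nonneg (ENNReal.toReal_nonneg (a := τ (cylW w)))]
        exact mul_le_mul_of_nonneg_left (hmu_est (n + 1) w).2 ENNReal.toReal_nonneg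
    _ = 2 * (DS γ (n + 1) + VS γ a (n + 1)) := by
        rw [← Finset.sum_mul, hsum1, one_mul]
  -- E3 : sum of t * log AW close to (n+1) I
  have E3 : ∀ n : ℕ,
      |(∑ w : Fin (n + 1) → E, (τ (cylW w)).toReal * Real.log (AW φ w)) - ((n : ℝ) + 1) * I|
        ≤ VS γ a (n + 1) := by
    intro n
    have h := sum_t_logAW_close hγ hB τ hτi (n + 1)
    have hc : ((n + 1 : ℕ) : ℝ) = (n : ℝ) + 1 := by push_cast; ring
    rw [hc] at h
    exact h
  -- the key bound
  have key : ∀ n : ℕ,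
      |relEntN τ μ n - (-Hseq τ (n + 1) + aSeq φ (n + 1) - ((n : ℝ) + 1) * I)|
        ≤ 3 * (DS γ (n + 1) + VS γ a (n + 1)) := by
    intro n
    have e2 := E2 n
    have e3 := E3 n
    have hd := DS_nonneg hγ (n + 1)
    have hv := VS_nonneg hγ a (n + 1)
    rw [E1 n]
    set Sn := ∑ w : Fin (n + 1) → E, (τ (cylW w)).toReal * Real.log (μ (cylW w)).toReal
    set S1 := ∑ w : Fin (n + 1) → E, (τ (cylW w)).toReal * Real.log (AW φ w)
    have hiden : -Hseq τ (n + 1) - Sn - (-Hseq τ (n + 1) + aSeq φ (n + 1) - ((n : ℝ) + 1) * I)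
        = -(Sn - (S1 - aSeq φ (n + 1))) - (S1 - ((n : ℝ) + 1) * I) := by ring
    rw [hiden]
    calc |-(Sn - (S1 - aSeq φ (n + 1))) - (S1 - ((n : ℝ) + 1) * I)|
        ≤ |-(Sn - (S1 - aSeq φ (n + 1)))| + |S1 - ((n : ℝ) + 1) * I| := abs_sub _ _
    _ = |Sn - (S1 - aSeq φ (n + 1))| + |S1 - ((n : ℝ) + 1) * I| := by rw [abs_neg]
    _ ≤ 2 * (DS γ (n + 1) + VS γ a (n + 1)) + VS γ a (n + 1) := add_le_add e2 e3
    _ ≤ 3 * (DS γ (n + 1) + VS γ a (n + 1)) := by linarith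
  -- limits
  have hH : Tendsto (fun n : ℕ => Hseq τ (n + 1) / n) atTop (𝓝 (ent τ)) :=
    shift_div_tendsto (ent_lim τ hτi)
  have hA : Tendsto (fun n : ℕ => aSeq φ (n + 1) / n) atTop (𝓝 (press φ)) :=
    shift_div_tendsto (press_lim hB)
  have hDS1 : Tendsto (fun n : ℕ => DS γ (n + 1) / n) atTop (𝓝 0) :=
    shift_div_tendsto (DS_div_tendsto hγ)
  have hVS1 : Tendsto (fun n : ℕ => VS γ a (n + 1) / n) atTop (𝓝 0) :=
    shift_div_tendsto (VS_div_tendsto hγ a)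
  have hErr : Tendsto (fun n : ℕ =>
      (relEntN τ μ n - (-Hseq τ (n + 1) + aSeq φ (n + 1) - ((n : ℝ) + 1) * I)) / n)
      atTop (𝓝 0) := by
    apply squeeze_zero_norm (a := fun n : ℕ => 3 * (DS γ (n + 1) / n + VS γ a (n + 1) / n))
    · intro n
      rcases Nat.eq_zero_or_pos n with hn | hn
      · subst hn
        simp only [Nat.cast_zero, div_zero, norm_zero]
        positivity
      · have hnpos : (0 : ℝ) < n := by exact_mod_cast hn
        rw [Real.norm_eq_abs, abs_div, abs_of_pos hnpos]
        have hkey := key n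
        calc |relEntN τ μ n - (-Hseq τ (n + 1) + aSeq φ (n + 1) - ((n : ℝ) + 1) * I)| / n
            ≤ 3 * (DS γ (n + 1) + VS γ a (n + 1)) / n := by
              apply div_le_div_of_nonneg_right hkey hnpos.le
        _ = 3 * (DS γ (n + 1) / n + VS γ a (n + 1) / n) := by ring
    · have := (hDS1.add hVS1).const_mul (3 : ℝ)
      simpa using this
  have hsum : Tendsto (fun n : ℕ =>
      -(Hseq τ (n + 1) / n) + aSeq φ (n + 1) / n - (((n : ℝ) + 1) / n) * I
        + (relEntN τ μ n - (-Hseq τ (n + 1) + aSeq φ (n + 1) - ((n : ℝ) + 1) * I)) / n)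
      atTop (𝓝 (-(ent τ) + press φ - 1 * I + 0)) :=
    ((hH.neg.add hA).sub (rat_tendsto_one.mul_const I)).add hErr
  have hval : -(ent τ) + press φ - 1 * I + 0 = press φ - ent τ - I := by ring
  rw [hval] at hsum
  apply hsum.congr
  intro n
  ring

end GP
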